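/- arXiv:1302.5226 — 2 statements merged into one kernel-verified Lean document; each statement's English description precedes it below -/
import Mathlib

section
/- Let φ : X → X be continuously differentiable with φ(x + λe) = φ(x) for all λ ∈ ℝ and x ∈ X, let M_t denote the (local) flow of ẋ = φ(x), and let U ⊆ X be a convex open set. For x₀ ∈ U let t_U(x₀) be the exit time of the solution from U. Define α(U) = inf{β ∈ ℝ : ‖M_t(x) − M_t(y)‖_H ≤ e^{βt}‖x − y‖_H for all x, y ∈ U and all 0 ≤ t < t_U(x) ∧ t_U(y)}. Then α(U) = sup_{x ∈ U} h(Dφ(x)), where h(L) := −inf{⟨ν, L(z)⟩ + ⟨π, L(e−z)⟩ : ν, π extreme points of P(e), z extreme point of [0,e] with ⟨ν,z⟩ + ⟨π, e−z⟩ = 0}. -/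
noncomputable section

/-- `M(x/y) = inf {t : ℝ | x ≤ t • y}`, where `x ≤ z` means `z - x ∈ C`. -/
def upSlope {X : Type*} [AddCommGroup X] [Module ℝ X] (C : Set X) (y x : X) : ℝ :=
  sInf {t : ℝ | t • y - x ∈ C}

/-- `m(x/y) = sup {t : ℝ | t • y ≤ x}`, where `x ≤ z` means `z - x ∈ C`. -/
def lowSlope {X : Type*} [AddCommGroup X] [Module ℝ X] (C : Set X) (y x : X) : ℝ :=
  sSup {t : ℝ | x - t • y ∈ C}

/-- Thompson's norm `‖x‖_T = max (M(x/e), -m(x/e))` with respect to the unit `e`. -/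
def thompsonNorm {X : Type*} [AddCommGroup X] [Module ℝ X] (C : Set X) (e x : X) : ℝ :=
  max (upSlope C e x) (-(lowSlope C e x))

/-- Hopf's oscillation seminorm `‖x‖_H = M(x/e) - m(x/e)` with respect to the unit `e`. -/
def hopfOsc {X : Type*} [AddCommGroup X] [Module ℝ X] (C : Set X) (e x : X) : ℝ :=
  upSlope C e x - lowSlope C e x

/-- The oscillation `ω(x/y) = M(x/y) - m(x/y)`. -/
def oscGen {X : Type*} [AddCommGroup X] [Module ℝ X] (C : Set X) (y x : X) : ℝ :=
  upSlope C y x - lowSlope C y x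

/-- Hilbert's projective metric `d_H(x,y) = log (M(x/y) / m(x/y))`. -/
def hilbertDist {X : Type*} [AddCommGroup X] [Module ℝ X] (C : Set X) (x y : X) : ℝ :=
  Real.log (upSlope C y x / lowSlope C y x)

/-- The dual cone `C⋆ = {μ ∈ X⋆ : ⟨μ,x⟩ ≥ 0 ∀ x ∈ C}` inside the topological dual. -/
def dualCone {X : Type*} [NormedAddCommGroup X] [NormedSpace ℝ X] (C : Set X) :
    Set (X →L[ℝ] ℝ) := {μ | ∀ x ∈ C, 0 ≤ μ x}

/-- The simplex `P(e) = {μ ∈ C⋆ : ⟨μ,e⟩ = 1}`. -/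
def simplexSet {X : Type*} [NormedAddCommGroup X] [NormedSpace ℝ X] (C : Set X) (e : X) :
    Set (X →L[ℝ] ℝ) := {μ | μ ∈ dualCone C ∧ μ e = 1}

/-- The dual norm of Thompson's norm. -/
def dualTNorm {X : Type*} [NormedAddCommGroup X] [NormedSpace ℝ X] (C : Set X) (e : X)
    (μ : X →L[ℝ] ℝ) : ℝ :=
  sSup {r : ℝ | ∃ x : X, thompsonNorm C e x ≤ 1 ∧ r = μ x}

/-- Disjointness `ν ⊥ π` of two elements of the simplex `P(e)`. -/
def disjointIn {X : Type*} [NormedAddCommGroup X] [NormedSpace ℝ X] (C : Set X) (e : X)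
    (ν π : X →L[ℝ] ℝ) : Prop :=
  ∀ μ ∈ simplexSet C e, μ - (2:ℝ)⁻¹ • ν ∈ dualCone C → μ - (2:ℝ)⁻¹ • π ∈ dualCone C →
    μ = (2:ℝ)⁻¹ • (ν + π)

/-- The order interval `[0,e] = {x : 0 ≤ x ≤ e}`. -/
def orderIntv {X : Type*} [AddCommGroup X] (C : Set X) (e : X) : Set X :=
  {x | x ∈ C ∧ e - x ∈ C}

/-- The operator (semi)norm of `T` with respect to Hopf's oscillation seminorms. -/
def opHNorm {X₁ : Type*} {X₂ : Type*} [NormedAddCommGroup X₁] [NormedSpace ℝ X₁]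
    [NormedAddCommGroup X₂] [NormedSpace ℝ X₂] (C₁ : Set X₁) (e₁ : X₁) (C₂ : Set X₂) (e₂ : X₂)
    (T : X₁ →L[ℝ] X₂) : ℝ :=
  sSup {r : ℝ | ∃ z : X₁, hopfOsc C₁ e₁ z ≤ 1 ∧ r = hopfOsc C₂ e₂ (T z)}

/-- `C` is a closed pointed convex cone. -/
def IsCPCone {X : Type*} [NormedAddCommGroup X] [NormedSpace ℝ X] (C : Set X) : Prop :=
  IsClosed C ∧ (∀ x ∈ C, ∀ y ∈ C, x + y ∈ C) ∧ (∀ t : ℝ, 0 ≤ t → ∀ x ∈ C, t • x ∈ C) ∧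
    (∀ x ∈ C, -x ∈ C → x = 0)

/-- `C` is a normal cone: `0 ≤ x ≤ y` implies `‖x‖ ≤ K ‖y‖` for some `K > 0`. -/
def IsNormalCone {X : Type*} [NormedAddCommGroup X] [NormedSpace ℝ X] (C : Set X) : Prop :=
  ∃ K > (0:ℝ), ∀ x y : X, x ∈ C → y - x ∈ C → ‖x‖ ≤ K * ‖y‖

/-- The contraction rate `h(L)` of the linear flow `ẋ = L(x)` in Hopf's oscillation seminorm. -/
def hFun {X : Type*} [NormedAddCommGroup X] [NormedSpace ℝ X] (C : Set X) (e : X)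
    (L : X →L[ℝ] X) : ℝ :=
  - sInf {r : ℝ | ∃ ν ∈ Set.extremePoints ℝ (simplexSet C e),
      ∃ π ∈ Set.extremePoints ℝ (simplexSet C e),
      ∃ x ∈ Set.extremePoints ℝ (orderIntv C e),
        ν x + π (e - x) = 0 ∧ r = ν (L x) + π (L (e - x))}

end

open scoped ENNReal
open Set Metric Filter Topology

namespace HopfAux

variable {X : Type*} [NormedAddCommGroup X] [NormedSpace ℝ X]

def Aset (C : Set X) (e v : X) : Set ℝ := {t : ℝ | t • e - v ∈ C}
def Bset (C : Set X) (e v : X) : Set ℝ := {t : ℝ | v - t • e ∈ C}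

theorem upSlope_eq (C : Set X) (e v : X) : upSlope C e v = sInf (Aset C e v) := rfl
theorem lowSlope_eq (C : Set X) (e v : X) : lowSlope C e v = sSup (Bset C e v) := rfl

variable {C : Set X} {e : X}

theorem cone_smul (hC : IsCPCone C) {t : ℝ} (ht : 0 ≤ t) {x : X} (hx : x ∈ C) : t • x ∈ C :=
  hC.2.2.1 t ht x hx

theorem cone_add (hC : IsCPCone C) {x y : X} (hx : x ∈ C) (hy : y ∈ C) : x + y ∈ C :=
  hC.2.1 x hx y hy

theorem cone_pointed (hC : IsCPCone C) {x : X} (hx : x ∈ C) (hx' : -x ∈ C) : x = 0 :=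
  hC.2.2.2 x hx hx'

theorem cone_zero (hC : IsCPCone C) (he : e ∈ C) : (0 : X) ∈ C := by
  simpa using cone_smul hC (le_refl (0:ℝ)) he

theorem cone_convex (hC : IsCPCone C) : Convex ℝ C := by
  intro x hx y hy a b ha hb _
  exact cone_add hC (cone_smul hC ha hx) (cone_smul hC hb hy)

/-- Any `t > ‖v‖/rb` belongs to `Aset`. -/
theorem mem_Aset_of_lt (hC : IsCPCone C) {rb : ℝ} (hrb : 0 < rb)
    (hball : Metric.ball e rb ⊆ C) (v : X) {t : ℝ} (ht : ‖v‖ / rb < t) : t ∈ Aset C e v := by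
  have ht0 : 0 < t := lt_of_le_of_lt (div_nonneg (norm_nonneg v) hrb.le) ht
  have h1 : e - t⁻¹ • v ∈ Metric.ball e rb := by
    rw [Metric.mem_ball, dist_eq_norm]
    have hn : ‖t⁻¹ • v‖ = ‖v‖ / t := by
      rw [norm_smul, norm_inv, Real.norm_eq_abs, abs_of_pos ht0]; ring
    rw [show e - t⁻¹ • v - e = -(t⁻¹ • v) by abel, norm_neg, hn]
    rw [div_lt_iff₀ ht0]
    calc ‖v‖ = (‖v‖ / rb) * rb := by field_simp
    _ < t * rb := by exact mul_lt_mul_of_pos_right ht hrb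
    _ = rb * t := mul_comm _ _
  have h2 : t • (e - t⁻¹ • v) ∈ C := cone_smul hC ht0.le (hball h1)
  have h3 : t • (e - t⁻¹ • v) = t • e - v := by
    rw [smul_sub, smul_inv_smul₀ ht0.ne']
  rw [Aset, Set.mem_setOf_eq, ← h3]; exact h2

theorem mem_Bset_of_lt (hC : IsCPCone C) {rb : ℝ} (hrb : 0 < rb)
    (hball : Metric.ball e rb ⊆ C) (v : X) {t : ℝ} (ht : t < -(‖v‖ / rb)) : t ∈ Bset C e v := by
  have ht' : ‖-v‖ / rb < -t := by rw [norm_neg]; linarith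
  have h := mem_Aset_of_lt hC hrb hball (-v) ht'
  rw [Aset, Set.mem_setOf_eq] at h
  rw [Bset, Set.mem_setOf_eq, show v - t • e = -t • e - -v by rw [neg_smul]; abel]
  exact h

theorem Aset_nonempty (hC : IsCPCone C) {rb : ℝ} (hrb : 0 < rb)
    (hball : Metric.ball e rb ⊆ C) (v : X) : (Aset C e v).Nonempty :=
  ⟨‖v‖ / rb + 1, mem_Aset_of_lt hC hrb hball v (lt_add_one _)⟩

theorem Bset_nonempty (hC : IsCPCone C) {rb : ℝ} (hrb : 0 < rb)
    (hball : Metric.ball e rb ⊆ C) (v : X) : (Bset C e v).Nonempty :=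
  ⟨-(‖v‖ / rb) - 1, mem_Bset_of_lt hC hrb hball v (by linarith)⟩

theorem Bset_le_Aset (hC : IsCPCone C) (hen : e ≠ 0) (he : e ∈ C) {v : X} {s t : ℝ}
    (hs : s ∈ Bset C e v) (ht : t ∈ Aset C e v) : s ≤ t := by
  by_contra h
  push_neg at h
  have h1 : (t - s) • e ∈ C := by
    have := cone_add hC ht hs
    rwa [show t • e - v + (v - s • e) = (t - s) • e by rw [sub_smul]; abel] at this
  have h2 : (s - t) • e ∈ C := cone_smul hC (by linarith) he
  have h3 : (s - t) • e = 0 := cone_pointed hC h2 (by rwa [show -((s-t)•e) = (t-s)•e by rw [← neg_smul]; ring_nf])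
  rcases smul_eq_zero.1 h3 with h4 | h4
  · linarith
  · exact hen h4

section Core
variable (hC : IsCPCone C) (hen : e ≠ 0) (he : e ∈ C) {rb : ℝ} (hrb : 0 < rb)
    (hball : Metric.ball e rb ⊆ C)

set_option linter.unusedSectionVars false
include hC hen he hrb hball

theorem Aset_bddBelow (v : X) : BddBelow (Aset C e v) :=
  ⟨-(‖v‖ / rb) - 1, fun _ ht =>
    Bset_le_Aset hC hen he (mem_Bset_of_lt hC hrb hball v (by linarith)) ht⟩

theorem Bset_bddAbove (v : X) : BddAbove (Bset C e v) :=
  ⟨‖v‖ / rb + 1, fun _ hs =>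
    Bset_le_Aset hC hen he hs (mem_Aset_of_lt hC hrb hball v (lt_add_one _))⟩

theorem Aset_isClosed (v : X) : IsClosed (Aset C e v) :=
  hC.1.preimage ((continuous_id.smul continuous_const).sub continuous_const)

theorem Bset_isClosed (v : X) : IsClosed (Bset C e v) :=
  hC.1.preimage (continuous_const.sub (continuous_id.smul continuous_const))

theorem upSlope_mem (v : X) : upSlope C e v ∈ Aset C e v :=
  (Aset_isClosed hC hen he hrb hball v).csInf_mem (Aset_nonempty hC hrb hball v)
    (Aset_bddBelow hC hen he hrb hball v)

theorem lowSlope_mem (v : X) : lowSlope C e v ∈ Bset C e v :=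
  (Bset_isClosed hC hen he hrb hball v).csSup_mem (Bset_nonempty hC hrb hball v)
    (Bset_bddAbove hC hen he hrb hball v)

theorem upSlope_le {v : X} {t : ℝ} (ht : t ∈ Aset C e v) : upSlope C e v ≤ t :=
  csInf_le (Aset_bddBelow hC hen he hrb hball v) ht

theorem le_lowSlope {v : X} {t : ℝ} (ht : t ∈ Bset C e v) : t ≤ lowSlope C e v :=
  le_csSup (Bset_bddAbove hC hen he hrb hball v) ht

theorem lowSlope_le_upSlope (v : X) : lowSlope C e v ≤ upSlope C e v :=
  Bset_le_Aset hC hen he (lowSlope_mem hC hen he hrb hball v)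
    (upSlope_mem hC hen he hrb hball v)

theorem hopfOsc_nonneg (v : X) : 0 ≤ hopfOsc C e v :=
  sub_nonneg.2 (lowSlope_le_upSlope hC hen he hrb hball v)

theorem upSlope_le_norm (v : X) : upSlope C e v ≤ ‖v‖ / rb := by
  refine le_of_forall_pos_le_add fun ε hε => ?_
  exact upSlope_le hC hen he hrb hball (mem_Aset_of_lt hC hrb hball v (by linarith))

theorem neg_norm_le_lowSlope (v : X) : -(‖v‖ / rb) ≤ lowSlope C e v := by
  rw [neg_le]
  refine le_of_forall_pos_le_add fun ε hε => ?_
  rw [neg_le]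
  refine le_lowSlope hC hen he hrb hball (mem_Bset_of_lt hC hrb hball v ?_)
  linarith

theorem upSlope_sub_le (a b : X) :
    upSlope C e a ≤ upSlope C e b + upSlope C e (a - b) := by
  refine upSlope_le hC hen he hrb hball ?_
  have h1 := upSlope_mem hC hen he hrb hball b
  have h2 := upSlope_mem hC hen he hrb hball (a - b)
  have := cone_add hC h1 h2
  rwa [show upSlope C e b • e - b + (upSlope C e (a-b) • e - (a - b))
      = (upSlope C e b + upSlope C e (a-b)) • e - a by rw [add_smul]; abel] at this

theorem lowSlope_sub_ge (a b : X) :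
    lowSlope C e b + lowSlope C e (a - b) ≤ lowSlope C e a := by
  refine le_lowSlope hC hen he hrb hball ?_
  have h1 := lowSlope_mem hC hen he hrb hball b
  have h2 := lowSlope_mem hC hen he hrb hball (a - b)
  have := cone_add hC h1 h2
  rwa [show b - lowSlope C e b • e + (a - b - lowSlope C e (a-b) • e)
      = a - (lowSlope C e b + lowSlope C e (a-b)) • e by rw [add_smul]; abel] at this

theorem hopfOsc_le_norm (v : X) : hopfOsc C e v ≤ 2 / rb * ‖v‖ := by
  have h1 := upSlope_le_norm hC hen he hrb hball v
  have h2 := neg_norm_le_lowSlope hC hen he hrb hball v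
  unfold hopfOsc
  have : ‖v‖ / rb + ‖v‖ / rb = 2 / rb * ‖v‖ := by ring
  linarith

theorem hopfOsc_sub_le (a b : X) :
    hopfOsc C e a - hopfOsc C e b ≤ 2 / rb * ‖a - b‖ := by
  have h1 := upSlope_sub_le hC hen he hrb hball a b
  have h2 := lowSlope_sub_ge hC hen he hrb hball a b
  have h3 := hopfOsc_le_norm hC hen he hrb hball (a - b)
  unfold hopfOsc at *
  linarith

theorem upSlope_smul {c : ℝ} (hc : 0 < c) (v : X) :
    upSlope C e (c • v) = c * upSlope C e v := by
  refine le_antisymm (upSlope_le hC hen he hrb hball ?_) ?_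
  · have := cone_smul hC hc.le (upSlope_mem hC hen he hrb hball v)
    rwa [show c • (upSlope C e v • e - v) = (c * upSlope C e v) • e - c • v by
      rw [smul_sub, smul_smul]] at this
  · rw [show c * upSlope C e v = c * upSlope C e v from rfl]
    have h : upSlope C e v ≤ c⁻¹ * upSlope C e (c • v) := by
      refine upSlope_le hC hen he hrb hball ?_
      have := cone_smul hC (inv_nonneg.2 hc.le) (upSlope_mem hC hen he hrb hball (c • v))
      rwa [show c⁻¹ • (upSlope C e (c • v) • e - c • v)
          = (c⁻¹ * upSlope C e (c • v)) • e - v by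
        rw [smul_sub, smul_smul, smul_smul, inv_mul_cancel₀ hc.ne', one_smul]] at this
    calc c * upSlope C e v ≤ c * (c⁻¹ * upSlope C e (c • v)) :=
          mul_le_mul_of_nonneg_left h hc.le
    _ = upSlope C e (c • v) := by field_simp

theorem lowSlope_smul {c : ℝ} (hc : 0 < c) (v : X) :
    lowSlope C e (c • v) = c * lowSlope C e v := by
  refine le_antisymm ?_ (le_lowSlope hC hen he hrb hball ?_)
  · have h : c⁻¹ * lowSlope C e (c • v) ≤ lowSlope C e v := by
      refine le_lowSlope hC hen he hrb hball ?_
      have := cone_smul hC (inv_nonneg.2 hc.le) (lowSlope_mem hC hen he hrb hball (c • v))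
      rwa [show c⁻¹ • (c • v - lowSlope C e (c • v) • e)
          = v - (c⁻¹ * lowSlope C e (c • v)) • e by
        rw [smul_sub, smul_smul, smul_smul, inv_mul_cancel₀ hc.ne', one_smul]] at this
    calc lowSlope C e (c • v) = c * (c⁻¹ * lowSlope C e (c • v)) := by field_simp
    _ ≤ c * lowSlope C e v := mul_le_mul_of_nonneg_left h hc.le
  · have := cone_smul hC hc.le (lowSlope_mem hC hen he hrb hball v)
    rwa [show c • (v - lowSlope C e v • e) = c • v - (c * lowSlope C e v) • e by
      rw [smul_sub, smul_smul]] at this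

theorem hopfOsc_smul {c : ℝ} (hc : 0 < c) (v : X) :
    hopfOsc C e (c • v) = c * hopfOsc C e v := by
  unfold hopfOsc
  rw [upSlope_smul hC hen he hrb hball hc, lowSlope_smul hC hen he hrb hball hc]; ring

theorem eq_smul_of_hopfOsc_eq_zero {v : X} (hv : hopfOsc C e v = 0) :
    v = lowSlope C e v • e := by
  have h1 := upSlope_mem hC hen he hrb hball v
  have h2 := lowSlope_mem hC hen he hrb hball v
  have hMm : upSlope C e v = lowSlope C e v := by
    have := sub_eq_zero.1 hv; linarith [this.le, this.ge]
  have h3 : -(v - lowSlope C e v • e) ∈ C := by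
    rw [show -(v - lowSlope C e v • e) = lowSlope C e v • e - v by abel, ← hMm]
    exact h1
  have := cone_pointed hC h2 h3
  rw [sub_eq_zero] at this
  exact this

theorem Pe_apply_le_upSlope {ν : X →L[ℝ] ℝ} (hν : ν ∈ simplexSet C e) (v : X) :
    ν v ≤ upSlope C e v := by
  have h1 := hν.1 _ (upSlope_mem hC hen he hrb hball v)
  have h2 : ν (upSlope C e v • e - v) = upSlope C e v * ν e - ν v := by
    rw [map_sub, map_smul]; rfl
  rw [h2, hν.2] at h1; linarith

theorem lowSlope_le_Pe_apply {ν : X →L[ℝ] ℝ} (hν : ν ∈ simplexSet C e) (v : X) :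
    lowSlope C e v ≤ ν v := by
  have h1 := hν.1 _ (lowSlope_mem hC hen he hrb hball v)
  have h2 : ν (v - lowSlope C e v • e) = ν v - lowSlope C e v * ν e := by
    rw [map_sub, map_smul]; rfl
  rw [h2, hν.2] at h1; linarith

theorem Pe_apply_sub_le_hopfOsc {ν π : X →L[ℝ] ℝ} (hν : ν ∈ simplexSet C e)
    (hπ : π ∈ simplexSet C e) (v : X) : ν v - π v ≤ hopfOsc C e v :=
  sub_le_sub (Pe_apply_le_upSlope hC hen he hrb hball hν v)
    (lowSlope_le_Pe_apply hC hen he hrb hball hπ v)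

theorem Pe_abs_apply_le {ν : X →L[ℝ] ℝ} (hν : ν ∈ simplexSet C e) (v : X) :
    |ν v| ≤ ‖v‖ / rb := by
  rw [abs_le]
  constructor
  · have h1 := lowSlope_le_Pe_apply hC hen he hrb hball hν v
    have h2 := neg_norm_le_lowSlope hC hen he hrb hball v
    linarith
  · have h1 := Pe_apply_le_upSlope hC hen he hrb hball hν v
    have h2 := upSlope_le_norm hC hen he hrb hball v
    linarith

omit hen in
theorem eval_e_pos {μ : X →L[ℝ] ℝ} (hμ : μ ∈ dualCone C) (hμ0 : μ ≠ 0) : 0 < μ e := by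
  rcases lt_or_eq_of_le (hμ e he) with h | h
  · exact h
  · exfalso
    apply hμ0
    ext v
    have key : ∀ w : X, 0 ≤ μ w := by
      intro w
      have hδ : 0 < rb / (‖w‖ + 1) := div_pos hrb (by positivity)
      have hmem : e + (rb / (‖w‖ + 1)) • w ∈ C := by
        apply hball
        rw [Metric.mem_ball, dist_eq_norm, show e + (rb / (‖w‖ + 1)) • w - e
          = (rb / (‖w‖ + 1)) • w by abel, norm_smul, Real.norm_eq_abs, abs_of_pos hδ]
        rw [div_mul_eq_mul_div, div_lt_iff₀ (by positivity)]
        have : ‖w‖ < ‖w‖ + 1 := lt_add_one _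
        nlinarith [norm_nonneg w, hrb]
      have := hμ _ hmem
      rw [map_add, map_smul, ← h] at this
      simp only [smul_eq_mul] at this
      nlinarith
    have h1 := key v
    have h2 := key (-v)
    rw [map_neg] at h2
    simp only [ContinuousLinearMap.zero_apply]
    linarith

omit hen in
theorem exists_Pe_neg {q : X} (hq : q ∉ C) : ∃ ν ∈ simplexSet C e, ν q < 0 := by
  obtain ⟨f, u, hfu, huq⟩ := geometric_hahn_banach_closed_point (cone_convex hC) hC.1 hq
  have h0 : (0:ℝ) < u := by simpa using hfu 0 (cone_zero hC he)
  have hfC : ∀ a ∈ C, f a ≤ 0 := by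
    intro a ha
    by_contra hfa
    push_neg at hfa
    obtain ⟨n, hn⟩ := exists_nat_gt (u / f a)
    have : f ((n : ℝ) • a) < u := hfu _ (cone_smul hC (Nat.cast_nonneg n) ha)
    rw [map_smul, smul_eq_mul] at this
    rw [div_lt_iff₀ hfa] at hn
    linarith
  have hgdual : -f ∈ dualCone C := fun a ha => by
    simp only [ContinuousLinearMap.neg_apply, neg_nonneg]; exact hfC a ha
  have hgne : -f ≠ 0 := by
    intro hg
    have : f q = 0 := by
      have := congrArg (fun g => g q) hg
      simpa [neg_eq_zero] using congrFun (congrArg DFunLike.coe (neg_eq_zero.1 hg)) q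
    linarith
  have hge : 0 < (-f) e := eval_e_pos hC he hrb hball hgdual hgne
  refine ⟨((-f) e)⁻¹ • (-f), ⟨fun a ha => ?_, ?_⟩, ?_⟩
  · simp only [ContinuousLinearMap.smul_apply, smul_eq_mul]
    exact mul_nonneg (inv_nonneg.2 hge.le) (hgdual a ha)
  · simp only [ContinuousLinearMap.smul_apply, smul_eq_mul]
    exact inv_mul_cancel₀ hge.ne'
  · simp only [ContinuousLinearMap.smul_apply, smul_eq_mul,
      ContinuousLinearMap.neg_apply]
    have : f q > 0 := lt_trans h0 huq
    have h2 : (-f) q < 0 := by simp [this]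
    exact mul_neg_of_pos_of_neg (inv_pos.2 hge) h2

theorem Pe_nonempty : (simplexSet C e).Nonempty := by
  have hq : -e ∉ C := by
    intro h
    exact hen (cone_pointed hC he (by simpa using h))
  obtain ⟨ν, hν, _⟩ := exists_Pe_neg hC he hrb hball hq
  exact ⟨ν, hν⟩

omit hen he hrb hball in
theorem Pe_isClosed : IsClosed (simplexSet C e) := by
  have h1 : IsClosed (dualCone C : Set (X →L[ℝ] ℝ)) := by
    have : (dualCone C : Set (X →L[ℝ] ℝ)) = ⋂ x ∈ C, {μ | 0 ≤ μ x} := by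
      ext μ; simp [dualCone, Set.mem_iInter]
    rw [this]
    refine isClosed_biInter fun x _ => isClosed_le continuous_const ?_
    exact (ContinuousLinearMap.apply ℝ ℝ x).continuous
  have h2 : IsClosed {μ : X →L[ℝ] ℝ | μ e = 1} :=
    isClosed_eq (ContinuousLinearMap.apply ℝ ℝ e).continuous continuous_const
  exact h1.inter h2

theorem Pe_isBounded : Bornology.IsBounded (simplexSet C e) := by
  rw [Metric.isBounded_iff_subset_closedBall 0]
  refine ⟨rb⁻¹, fun ν hν => ?_⟩
  rw [Metric.mem_closedBall, dist_zero_right]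
  refine ContinuousLinearMap.opNorm_le_bound _ (inv_nonneg.2 hrb.le) fun v => ?_
  have := Pe_abs_apply_le hC hen he hrb hball hν v
  calc ‖ν v‖ = |ν v| := rfl
  _ ≤ ‖v‖ / rb := this
  _ = rb⁻¹ * ‖v‖ := by rw [div_eq_inv_mul]

omit hen he hrb hball in
theorem Pe_convex : Convex ℝ (simplexSet C e) := by
  intro μ hμ ν hν a b ha hb hab
  constructor
  · intro x hx
    simp only [ContinuousLinearMap.add_apply, ContinuousLinearMap.smul_apply, smul_eq_mul]
    exact add_nonneg (mul_nonneg ha (hμ.1 x hx)) (mul_nonneg hb (hν.1 x hx))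
  · simp only [ContinuousLinearMap.add_apply, ContinuousLinearMap.smul_apply, smul_eq_mul,
      hμ.2, hν.2]
    linarith

end Core

/-- Minimization of a linear functional over a compact convex set is achieved
at an extreme point. -/
theorem exists_extremePoint_isMinOn {Y : Type*} [NormedAddCommGroup Y] [NormedSpace ℝ Y]
    {A : Set Y} (hA : IsCompact A) (hAc : Convex ℝ A) (hne : A.Nonempty) (f : Y →L[ℝ] ℝ) :
    ∃ p ∈ Set.extremePoints ℝ A, ∀ q ∈ A, f p ≤ f q := by
  obtain ⟨q₀, hq₀, hmin⟩ := hA.exists_isMinOn hne f.continuous.continuousOn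
  set B := {x ∈ A | ∀ y ∈ A, (-f) y ≤ (-f) x} with hB
  have hBexp : IsExposed ℝ A B := fun _ => ⟨-f, rfl⟩
  have hBne : B.Nonempty := by
    refine ⟨q₀, hq₀, fun y hy => ?_⟩
    simp only [ContinuousLinearMap.neg_apply, neg_le_neg_iff]
    exact hmin hy
  have hBcp : IsCompact B := hBexp.isCompact hA
  have hBconv : Convex ℝ B := hBexp.convex hAc
  obtain ⟨p, hp⟩ := hBcp.extremePoints_nonempty hBne
  have hpB : p ∈ B := hp.1
  refine ⟨p, (hBexp.isExtreme).extremePoints_subset_extremePoints hp, fun q hq => ?_⟩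
  have := hpB.2 q hq
  simpa using this

section FD
variable [FiniteDimensional ℝ X]
variable (hC : IsCPCone C) (hen : e ≠ 0) (he : e ∈ C) {rb : ℝ} (hrb : 0 < rb)
    (hball : Metric.ball e rb ⊆ C)
include hC hen he hrb hball

theorem Pe_isCompact : IsCompact (simplexSet C e) :=
  isCompact_of_isClosed_isBounded (Pe_isClosed hC) (Pe_isBounded hC hen he hrb hball)

theorem exists_Pe_eq_upSlope (v : X) :
    ∃ ν ∈ simplexSet C e, ν v = upSlope C e v := by
  obtain ⟨ν₀, hν₀, hmax⟩ := (Pe_isCompact hC hen he hrb hball).exists_isMaxOn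
    (Pe_nonempty hC hen he hrb hball)
    (ContinuousLinearMap.apply ℝ ℝ v).continuous.continuousOn
  refine ⟨ν₀, hν₀, le_antisymm (Pe_apply_le_upSlope hC hen he hrb hball hν₀ v) ?_⟩
  by_contra h
  push_neg at h
  set t := (ν₀ v + upSlope C e v) / 2 with htdef
  have ht1 : ν₀ v < t := by rw [htdef]; linarith
  have ht2 : t < upSlope C e v := by rw [htdef]; linarith
  have htA : t • e - v ∉ C := by
    intro htA
    exact absurd (upSlope_le hC hen he hrb hball htA) (not_le.2 ht2)
  obtain ⟨ν, hν, hneg⟩ := exists_Pe_neg hC he hrb hball htA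
  have : ν v > t := by
    have : ν (t • e - v) = t * ν e - ν v := by rw [map_sub, map_smul]; rfl
    rw [this, hν.2] at hneg; linarith
  have h2 : ν v ≤ ν₀ v := hmax hν
  linarith

theorem exists_Pe_eq_lowSlope (v : X) :
    ∃ π ∈ simplexSet C e, π v = lowSlope C e v := by
  obtain ⟨π₀, hπ₀, hmin⟩ := (Pe_isCompact hC hen he hrb hball).exists_isMinOn
    (Pe_nonempty hC hen he hrb hball)
    (ContinuousLinearMap.apply ℝ ℝ v).continuous.continuousOn
  refine ⟨π₀, hπ₀, le_antisymm ?_ (lowSlope_le_Pe_apply hC hen he hrb hball hπ₀ v)⟩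
  by_contra h
  push_neg at h
  set t := (lowSlope C e v + π₀ v) / 2 with htdef
  have ht1 : lowSlope C e v < t := by rw [htdef]; linarith
  have ht2 : t < π₀ v := by rw [htdef]; linarith
  have htB : v - t • e ∉ C := by
    intro htB
    exact absurd (le_lowSlope hC hen he hrb hball htB) (not_le.2 ht1)
  obtain ⟨ν, hν, hneg⟩ := exists_Pe_neg hC he hrb hball htB
  have hlt : ν v < t := by
    have : ν (v - t • e) = ν v - t * ν e := by rw [map_sub, map_smul]; rfl
    rw [this, hν.2] at hneg; linarith
  have h2 : π₀ v ≤ ν v := hmin hν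
  linarith

omit hen he hrb hball in
theorem orderIntv_isClosed : IsClosed (orderIntv C e) := by
  have : orderIntv C e = C ∩ (fun x => e - x) ⁻¹' C := by
    ext x; simp [orderIntv]
  rw [this]
  exact hC.1.inter (hC.1.preimage (continuous_const.sub continuous_id))

omit hen he hrb hball in
theorem orderIntv_isBounded : Bornology.IsBounded (orderIntv C e) := by
  by_contra hb
  rw [Metric.isBounded_iff_subset_closedBall 0] at hb
  push_neg at hb
  have hx : ∀ n : ℕ, ∃ x ∈ orderIntv C e, (n : ℝ) < ‖x‖ := by
    intro n
    obtain ⟨x, hxK, hxn⟩ := Set.not_subset.1 (hb n)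
    refine ⟨x, hxK, ?_⟩
    by_contra hle
    exact hxn (by rw [Metric.mem_closedBall, dist_zero_right]; linarith)
  choose x hxK hxn using hx
  have hxpos : ∀ n : ℕ, (0:ℝ) < ‖x n‖ := fun n => lt_of_le_of_lt (Nat.cast_nonneg n) (hxn n)
  set y : ℕ → X := fun n => ‖x n‖⁻¹ • x n with hy
  have hysphere : ∀ n, y n ∈ Metric.sphere (0:X) 1 := by
    intro n
    rw [Metric.mem_sphere, dist_zero_right, hy, norm_smul, norm_inv, norm_norm,
      inv_mul_cancel₀ (hxpos n).ne']
  obtain ⟨v, hv, ψ, hψ, hlim⟩ := (isCompact_sphere (0:X) 1).tendsto_subseq hysphere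
  have hvC : v ∈ C := by
    refine hC.1.mem_of_tendsto hlim (Filter.Eventually.of_forall fun n => ?_)
    exact cone_smul hC (inv_nonneg.2 (norm_nonneg _)) (hxK (ψ n)).1
  have hnormtop : Filter.Tendsto (fun n => ‖x (ψ n)‖) Filter.atTop Filter.atTop := by
    apply Filter.tendsto_atTop_mono (fun n => (hxn (ψ n)).le)
    exact (tendsto_natCast_atTop_atTop (R := ℝ)).comp hψ.tendsto_atTop
  have hinv0 : Filter.Tendsto (fun n => ‖x (ψ n)‖⁻¹) Filter.atTop (nhds 0) :=
    hnormtop.inv_tendsto_atTop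
  have hzlim : Filter.Tendsto (fun n => ‖x (ψ n)‖⁻¹ • e - y (ψ n)) Filter.atTop
      (nhds (-v)) := by
    have : Filter.Tendsto (fun n => ‖x (ψ n)‖⁻¹ • e) Filter.atTop (nhds ((0:ℝ) • e)) :=
      hinv0.smul_const e
    rw [zero_smul] at this
    simpa using this.sub hlim
  have hnvC : -v ∈ C := by
    refine hC.1.mem_of_tendsto hzlim (Filter.Eventually.of_forall fun n => ?_)
    have := cone_smul hC (inv_nonneg.2 (norm_nonneg (x (ψ n)))) (hxK (ψ n)).2
    rw [smul_sub] at this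
    simpa [hy] using this
  have := cone_pointed hC hvC hnvC
  rw [Metric.mem_sphere, dist_zero_right] at hv
  rw [this] at hv
  simp at hv

omit hen he hrb hball in
theorem orderIntv_isCompact : IsCompact (orderIntv C e) :=
  isCompact_of_isClosed_isBounded (orderIntv_isClosed hC) (orderIntv_isBounded hC)

omit hen hrb hball in
theorem orderIntv_convex : Convex ℝ (orderIntv C e) := by
  intro a ha b hb s t hs ht hst
  constructor
  · exact cone_add hC (cone_smul hC hs ha.1) (cone_smul hC ht hb.1)
  · have := cone_add hC (cone_smul hC hs ha.2) (cone_smul hC ht hb.2)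
    obtain rfl : t = 1 - s := by linarith
    rwa [show s • (e - a) + (1 - s) • (e - b) = e - (s • a + (1 - s) • b) by module] at this

end FD

/-- The constraint set appearing in `hFun`. -/
def Tset (C : Set X) (e : X) (L : X →L[ℝ] X) : Set ℝ :=
  {r : ℝ | ∃ ν ∈ Set.extremePoints ℝ (simplexSet C e),
      ∃ π ∈ Set.extremePoints ℝ (simplexSet C e),
      ∃ x ∈ Set.extremePoints ℝ (orderIntv C e),
        ν x + π (e - x) = 0 ∧ r = ν (L x) + π (L (e - x))}

theorem hFun_eq (C : Set X) (e : X) (L : X →L[ℝ] X) : hFun C e L = - sInf (Tset C e L) := rfl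

section FD2
variable [FiniteDimensional ℝ X]
variable (hC : IsCPCone C) (hen : e ≠ 0) (he : e ∈ C) {rb : ℝ} (hrb : 0 < rb)
    (hball : Metric.ball e rb ⊆ C)
include hC hen he hrb hball

theorem Tset_bddBelow (L : X →L[ℝ] X) : BddBelow (Tset C e L) := by
  obtain ⟨bK, hbK⟩ := (orderIntv_isBounded hC).subset_closedBall 0
  refine ⟨-(‖L‖ * bK / rb + ‖L‖ * (‖e‖ + bK) / rb), ?_⟩
  rintro r ⟨ν, hν, π, hπ, x, hx, -, rfl⟩
  have hxK : x ∈ orderIntv C e := hx.1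
  have hxb : ‖x‖ ≤ bK := by
    have := hbK hxK; rwa [Metric.mem_closedBall, dist_zero_right] at this
  have hexb : ‖e - x‖ ≤ ‖e‖ + bK := le_trans (norm_sub_le e x) (by linarith)
  have h1 : |ν (L x)| ≤ ‖L‖ * bK / rb := by
    have := Pe_abs_apply_le hC hen he hrb hball hν.1 (L x)
    have h2 : ‖L x‖ ≤ ‖L‖ * bK := le_trans (L.le_opNorm x)
      (mul_le_mul_of_nonneg_left hxb (norm_nonneg L))
    calc |ν (L x)| ≤ ‖L x‖ / rb := this
    _ ≤ ‖L‖ * bK / rb := by gcongr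
  have h2 : |π (L (e - x))| ≤ ‖L‖ * (‖e‖ + bK) / rb := by
    have := Pe_abs_apply_le hC hen he hrb hball hπ.1 (L (e - x))
    have h3 : ‖L (e - x)‖ ≤ ‖L‖ * (‖e‖ + bK) := le_trans (L.le_opNorm _)
      (mul_le_mul_of_nonneg_left hexb (norm_nonneg L))
    calc |π (L (e - x))| ≤ ‖L (e - x)‖ / rb := this
    _ ≤ ‖L‖ * (‖e‖ + bK) / rb := by gcongr
  have := abs_le.1 h1
  have := abs_le.1 h2
  linarith [(abs_le.1 h1).1, (abs_le.1 h2).1]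

theorem exists_extreme_triple (L : X →L[ℝ] X) (hLe : L e = 0) {w : X}
    (hw : 0 < hopfOsc C e w) {ν π : X →L[ℝ] ℝ} (hν : ν ∈ simplexSet C e)
    (hπ : π ∈ simplexSet C e) (hνw : ν w = upSlope C e w) (hπw : π w = lowSlope C e w) :
    ∃ r ∈ Tset C e L, r * hopfOsc C e w ≤ -(ν (L w) - π (L w)) := by
  classical
  set o := hopfOsc C e w with ho
  set z := o⁻¹ • (w - lowSlope C e w • e) with hz
  have hz1 : z ∈ C := cone_smul hC (inv_nonneg.2 hw.le) (lowSlope_mem hC hen he hrb hball w)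
  have ho' : o ≠ 0 := hw.ne'
  have hMmo : upSlope C e w = o + lowSlope C e w := by rw [ho]; unfold hopfOsc; ring
  have hz2 : e - z ∈ C := by
    have h0 : e - z = o⁻¹ • (upSlope C e w • e - w) := by
      rw [hz, hMmo]
      match_scalars <;> field_simp <;> ring
    rw [h0]
    exact cone_smul hC (inv_nonneg.2 hw.le) (upSlope_mem hC hen he hrb hball w)
  have hνz : ν z = 1 := by
    have hs : ν (w - lowSlope C e w • e) = o := by
      rw [map_sub, map_smul, smul_eq_mul, hνw, hν.2, mul_one, ho]; rfl
    rw [hz, map_smul, hs, smul_eq_mul, inv_mul_cancel₀ ho']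
  have hπz : π z = 0 := by
    have hs : π (w - lowSlope C e w • e) = 0 := by
      rw [map_sub, map_smul, smul_eq_mul, hπw, hπ.2, mul_one, sub_self]
    rw [hz, map_smul, hs, smul_eq_mul, mul_zero]
  set x := e - z with hxdef
  have hxK : x ∈ orderIntv C e := ⟨hz2, by rw [hxdef]; simpa using hz1⟩
  have hνx : ν x = 0 := by rw [hxdef, map_sub, hν.2, hνz, sub_self]
  have hπex : π (e - x) = 0 := by rw [hxdef]; simpa using hπz
  -- Step 1 : optimize ν
  set Pe := simplexSet C e with hPe
  have hPecpt := Pe_isCompact hC hen he hrb hball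
  have hPeconv := Pe_convex (e := e) hC
  set A₁ := {ν' ∈ Pe | ν' x = 0} with hA₁
  have hA₁cpt : IsCompact A₁ := by
    refine hPecpt.of_isClosed_subset (hPecpt.isClosed.inter ?_) (Set.sep_subset _ _)
    exact isClosed_eq (ContinuousLinearMap.apply ℝ ℝ x).continuous continuous_const
  have hA₁exp : IsExposed ℝ Pe A₁ := by
    intro _
    refine ⟨-(ContinuousLinearMap.apply ℝ ℝ x), ?_⟩
    ext μ
    constructor
    · rintro ⟨hμ, hμx⟩
      refine ⟨hμ, fun μ' hμ' => ?_⟩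
      simp only [ContinuousLinearMap.neg_apply, ContinuousLinearMap.apply_apply, hμx, neg_zero]
      exact neg_nonpos.2 (hμ'.1 x hxK.1)
    · rintro ⟨hμ, hmax⟩
      refine ⟨hμ, le_antisymm ?_ (hμ.1 x hxK.1)⟩
      have := hmax ν hν
      simp only [ContinuousLinearMap.neg_apply, ContinuousLinearMap.apply_apply, hνx,
        neg_zero] at this
      linarith
  have hA₁conv : Convex ℝ A₁ := hA₁exp.convex hPeconv
  have hA₁ne : A₁.Nonempty := ⟨ν, hν, hνx⟩
  obtain ⟨ν₁, hν₁ext, hν₁min⟩ := exists_extremePoint_isMinOn hA₁cpt hA₁conv hA₁ne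
    ((ContinuousLinearMap.apply ℝ ℝ (L x)))
  have hν₁Pe : ν₁ ∈ Set.extremePoints ℝ Pe :=
    hA₁exp.isExtreme.extremePoints_subset_extremePoints hν₁ext
  have hν₁A : ν₁ ∈ A₁ := hν₁ext.1
  -- Step 2 : optimize π
  set A₂ := {π' ∈ Pe | π' (e - x) = 0} with hA₂
  have hA₂cpt : IsCompact A₂ := by
    refine hPecpt.of_isClosed_subset (hPecpt.isClosed.inter ?_) (Set.sep_subset _ _)
    exact isClosed_eq (ContinuousLinearMap.apply ℝ ℝ (e - x)).continuous continuous_const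
  have hA₂exp : IsExposed ℝ Pe A₂ := by
    intro _
    refine ⟨-(ContinuousLinearMap.apply ℝ ℝ (e - x)), ?_⟩
    ext μ
    constructor
    · rintro ⟨hμ, hμx⟩
      refine ⟨hμ, fun μ' hμ' => ?_⟩
      simp only [ContinuousLinearMap.neg_apply, ContinuousLinearMap.apply_apply, hμx, neg_zero]
      exact neg_nonpos.2 (hμ'.1 (e - x) hxK.2)
    · rintro ⟨hμ, hmax⟩
      refine ⟨hμ, le_antisymm ?_ (hμ.1 (e - x) hxK.2)⟩
      have := hmax π hπ
      simp only [ContinuousLinearMap.neg_apply, ContinuousLinearMap.apply_apply, hπex,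
        neg_zero] at this
      linarith
  have hA₂conv : Convex ℝ A₂ := hA₂exp.convex hPeconv
  have hA₂ne : A₂.Nonempty := ⟨π, hπ, hπex⟩
  obtain ⟨π₁, hπ₁ext, hπ₁min⟩ := exists_extremePoint_isMinOn hA₂cpt hA₂conv hA₂ne
    ((ContinuousLinearMap.apply ℝ ℝ (L (e - x))))
  have hπ₁Pe : π₁ ∈ Set.extremePoints ℝ Pe :=
    hA₂exp.isExtreme.extremePoints_subset_extremePoints hπ₁ext
  have hπ₁A : π₁ ∈ A₂ := hπ₁ext.1
  -- Step 3 : optimize x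
  set K := orderIntv C e with hK
  have hKcpt := orderIntv_isCompact (e := e) hC
  have hKconv := orderIntv_convex (e := e) hC he
  set B₁ := {x' ∈ K | ν₁ x' = 0} with hB₁
  set B₂ := {x' ∈ K | π₁ (e - x') = 0} with hB₂
  have hB₁exp : IsExposed ℝ K B₁ := by
    intro _
    refine ⟨-ν₁, ?_⟩
    ext p
    constructor
    · rintro ⟨hp, hp0⟩
      refine ⟨hp, fun q hq => ?_⟩
      simp only [ContinuousLinearMap.neg_apply, hp0, neg_zero]
      exact neg_nonpos.2 (hν₁A.1.1 q hq.1)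
    · rintro ⟨hp, hmax⟩
      refine ⟨hp, le_antisymm ?_ (hν₁A.1.1 p hp.1)⟩
      have := hmax x hxK
      simp only [ContinuousLinearMap.neg_apply, hν₁A.2, neg_zero] at this
      linarith
  have hB₂exp : IsExposed ℝ K B₂ := by
    intro _
    refine ⟨π₁, ?_⟩
    ext p
    constructor
    · rintro ⟨hp, hp0⟩
      have hpval : π₁ p = 1 := by
        have : π₁ (e - p) = 1 - π₁ p := by rw [map_sub, hπ₁A.1.2]
        rw [this] at hp0; linarith
      refine ⟨hp, fun q hq => ?_⟩
      rw [hpval]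
      have : π₁ (e - q) = 1 - π₁ q := by rw [map_sub, hπ₁A.1.2]
      have h2 := hπ₁A.1.1 (e - q) hq.2
      rw [this] at h2
      linarith
    · rintro ⟨hp, hmax⟩
      refine ⟨hp, ?_⟩
      have hxval : π₁ x = 1 := by
        have h := hπ₁A.2
        have heq : π₁ (e - x) = 1 - π₁ x := by rw [map_sub, hπ₁A.1.2]
        rw [heq] at h; linarith
      have h1 : π₁ x ≤ π₁ p := hmax x hxK
      have h3 : π₁ (e - p) = 1 - π₁ p := by rw [map_sub, hπ₁A.1.2]
      have h2 := hπ₁A.1.1 (e - p) hp.2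
      rw [hxval] at h1
      rw [h3] at h2 ⊢
      linarith
  have hBextreme : IsExtreme ℝ K (B₁ ∩ B₂) := hB₁exp.isExtreme.inter hB₂exp.isExtreme
  have hB₁closed : IsClosed B₁ := by
    have hBeq : B₁ = K ∩ ⇑ν₁ ⁻¹' {0} := by ext p; simp [hB₁]
    rw [hBeq]
    exact hKcpt.isClosed.inter (IsClosed.preimage ν₁.continuous isClosed_singleton)
  have hB₂closed : IsClosed B₂ := by
    have hBeq : B₂ = K ∩ (fun p => π₁ (e - p)) ⁻¹' {0} := by ext p; simp [hB₂]
    rw [hBeq]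
    exact hKcpt.isClosed.inter (IsClosed.preimage
      (π₁.continuous.comp (continuous_const.sub continuous_id)) isClosed_singleton)
  have hBcpt : IsCompact (B₁ ∩ B₂) :=
    hKcpt.of_isClosed_subset (hB₁closed.inter hB₂closed) (fun p hp => hp.1.1)
  have hBconv : Convex ℝ (B₁ ∩ B₂) := by
    have h1 : Convex ℝ B₁ := hB₁exp.convex hKconv
    have h2 : Convex ℝ B₂ := hB₂exp.convex hKconv
    exact h1.inter h2
  have hBne : (B₁ ∩ B₂).Nonempty := ⟨x, ⟨hxK, hν₁A.2⟩, ⟨hxK, hπ₁A.2⟩⟩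
  obtain ⟨x₂, hx₂ext, hx₂min⟩ := exists_extremePoint_isMinOn hBcpt hBconv hBne
    (ν₁.comp L - π₁.comp L)
  have hx₂K : x₂ ∈ Set.extremePoints ℝ K :=
    hBextreme.extremePoints_subset_extremePoints hx₂ext
  have hx₂B : x₂ ∈ B₁ ∩ B₂ := hx₂ext.1
  -- value computations
  have hLval : ∀ (μ : X →L[ℝ] ℝ) (p : X), μ (L (e - p)) = - μ (L p) := by
    intro μ p
    rw [show L (e - p) = - L p by rw [map_sub, hLe, zero_sub], map_neg]
  refine ⟨ν₁ (L x₂) + π₁ (L (e - x₂)), ⟨ν₁, hν₁Pe, π₁, hπ₁Pe, x₂, hx₂K,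
    by rw [hx₂B.1.2, hx₂B.2.2, add_zero], rfl⟩, ?_⟩
  -- chain of inequalities
  have hs3 : ν₁ (L x₂) + π₁ (L (e - x₂)) ≤ ν₁ (L x) + π₁ (L (e - x)) := by
    have hmin3 := hx₂min x ⟨⟨hxK, hν₁A.2⟩, ⟨hxK, hπ₁A.2⟩⟩
    simp only [ContinuousLinearMap.sub_apply, ContinuousLinearMap.comp_apply] at hmin3
    have e1 : π₁ (L (e - x₂)) = - π₁ (L x₂) := hLval π₁ x₂
    have e2 : π₁ (L (e - x)) = - π₁ (L x) := hLval π₁ x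
    linarith
  have hs2 : ν₁ (L x) + π₁ (L (e - x)) ≤ ν₁ (L x) + π (L (e - x)) := by
    have h := hπ₁min π ⟨hπ, hπex⟩
    have h' : π₁ (L (e - x)) ≤ π (L (e - x)) := h
    linarith
  have hs1 : ν₁ (L x) + π (L (e - x)) ≤ ν (L x) + π (L (e - x)) := by
    have h := hν₁min ν ⟨hν, hνx⟩
    have h' : ν₁ (L x) ≤ ν (L x) := h
    linarith
  have hLzw : L z = o⁻¹ • L w := by
    rw [hz, map_smul, map_sub, map_smul, hLe, smul_zero, sub_zero]
  have hexz : e - x = z := by rw [hxdef]; abel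
  have hr0 : ν (L x) + π (L (e - x)) = o⁻¹ * (π (L w) - ν (L w)) := by
    have h1 : ν (L x) = - ν (L z) := by rw [hxdef]; exact hLval ν z
    have h2 : π (L (e - x)) = π (L z) := by rw [hexz]
    have h3 : ν (L z) = o⁻¹ * ν (L w) := by rw [hLzw, map_smul, smul_eq_mul]
    have h4 : π (L z) = o⁻¹ * π (L w) := by rw [hLzw, map_smul, smul_eq_mul]
    rw [h1, h2, h3, h4]; ring
  have hval : ν₁ (L x₂) + π₁ (L (e - x₂)) ≤ o⁻¹ * (π (L w) - ν (L w)) := by linarith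
  calc (ν₁ (L x₂) + π₁ (L (e - x₂))) * o ≤ o⁻¹ * (π (L w) - ν (L w)) * o :=
        mul_le_mul_of_nonneg_right hval hw.le
  _ = -(ν (L w) - π (L w)) := by field_simp; ring

theorem Pe_sub_apply_le_hFun (L : X →L[ℝ] X) (hLe : L e = 0) (v : X)
    {ν π : X →L[ℝ] ℝ} (hν : ν ∈ simplexSet C e) (hπ : π ∈ simplexSet C e)
    (hνv : ν v = upSlope C e v) (hπv : π v = lowSlope C e v) :
    ν (L v) - π (L v) ≤ hFun C e L * hopfOsc C e v := by
  rcases eq_or_lt_of_le (hopfOsc_nonneg hC hen he hrb hball v) with h0 | hpos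
  · have hv := eq_smul_of_hopfOsc_eq_zero hC hen he hrb hball h0.symm
    have hLv : L v = 0 := by rw [hv, map_smul, hLe, smul_zero]
    rw [hLv, map_zero, map_zero, ← h0, mul_zero, sub_zero]
  · obtain ⟨r, hrT, hrle⟩ := exists_extreme_triple hC hen he hrb hball L hLe hpos hν hπ hνv hπv
    have h1 : sInf (Tset C e L) ≤ r := csInf_le (Tset_bddBelow hC hen he hrb hball L) hrT
    have h2 : -r ≤ hFun C e L := by rw [hFun_eq]; linarith
    have h3 : ν (L v) - π (L v) ≤ (-r) * hopfOsc C e v := by linarith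
    calc ν (L v) - π (L v) ≤ (-r) * hopfOsc C e v := h3
    _ ≤ hFun C e L * hopfOsc C e v := mul_le_mul_of_nonneg_right h2 hpos.le

omit hrb hball in
/-- Facts about `u = e - x` for a feasible triple. -/
theorem feasible_facts {rb : ℝ} (hrb : 0 < rb) (hball : Metric.ball e rb ⊆ C)
    {ν π : X →L[ℝ] ℝ} {x : X} (hν : ν ∈ simplexSet C e) (hπ : π ∈ simplexSet C e)
    (hx : x ∈ orderIntv C e) (hcon : ν x + π (e - x) = 0) :
    upSlope C e (e - x) = 1 ∧ lowSlope C e (e - x) = 0 ∧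
      ν (e - x) = 1 ∧ π (e - x) = 0 ∧ ν x = 0 := by
  have h1 : 0 ≤ ν x := hν.1 x hx.1
  have h2 : 0 ≤ π (e - x) := hπ.1 (e - x) hx.2
  have hνx : ν x = 0 := by linarith
  have hπex : π (e - x) = 0 := by linarith
  have hνex : ν (e - x) = 1 := by rw [map_sub, hν.2, hνx, sub_zero]
  have hup : upSlope C e (e - x) = 1 := by
    refine le_antisymm (upSlope_le hC hen he hrb hball ?_) ?_
    · show (1:ℝ) • e - (e - x) ∈ C
      rw [one_smul, show e - (e - x) = x by abel]
      exact hx.1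
    · rw [← hνex]
      exact Pe_apply_le_upSlope hC hen he hrb hball hν (e - x)
  have hlow : lowSlope C e (e - x) = 0 := by
    refine le_antisymm ?_ (le_lowSlope hC hen he hrb hball ?_)
    · rw [← hπex]
      exact lowSlope_le_Pe_apply hC hen he hrb hball hπ (e - x)
    · show e - x - (0:ℝ) • e ∈ C
      rw [zero_smul, sub_zero]
      exact hx.2
  exact ⟨hup, hlow, hνex, hπex, hνx⟩

end FD2

section Calc
variable [FiniteDimensional ℝ X]

theorem fderiv_apply_e_eq_zero {φ : X → X} (hφ : ContDiff ℝ 1 φ)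
    (hinv : ∀ (x : X) (l : ℝ), φ (x + l • e) = φ x) (x : X) : fderiv ℝ φ x e = 0 := by
  have hdiff : DifferentiableAt ℝ φ x := (hφ.differentiable one_ne_zero).differentiableAt
  have hline : HasDerivAt (fun l : ℝ => x + l • e) e 0 := by
    simpa using ((hasDerivAt_id (0:ℝ)).smul_const e).const_add x
  have hF : HasFDerivAt φ (fderiv ℝ φ x) ((fun l : ℝ => x + l • e) 0) := by
    simpa using hdiff.hasFDerivAt
  have h1 : HasDerivAt (fun l : ℝ => φ (x + l • e)) (fderiv ℝ φ x e) 0 :=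
    hF.comp_hasDerivAt 0 hline
  have h2 : (fun l : ℝ => φ (x + l • e)) = fun _ => φ x := funext fun l => hinv x l
  rw [h2] at h1
  exact (h1.unique (hasDerivAt_const 0 (φ x)))

theorem tau_pos {φ : X → X} (hφ : ContDiff ℝ 1 φ) {U : Set X} (hUopen : IsOpen U)
    {τ : X → ℝ≥0∞}
    (hτmax : ∀ x ∈ U, ∀ (γ : ℝ → X) (s : ℝ≥0∞), γ 0 = x →
        (∀ t : ℝ, 0 ≤ t → ENNReal.ofReal t < s → HasDerivAt γ (φ (γ t)) t ∧ γ t ∈ U) →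
        s ≤ τ x)
    {x : X} (hx : x ∈ U) : 0 < τ x := by
  obtain ⟨f, hf0, ε, hε, hfd⟩ := ContDiffAt.exists_forall_mem_closedBall_exists_eq_forall_mem_Ioo_hasDerivAt₀
    (x₀ := x) hφ.contDiffAt (0:ℝ)
  have hfc : ContinuousAt f 0 := (hfd 0 (by constructor <;> linarith)).continuousAt
  have hU0 : f ⁻¹' U ∈ nhds (0:ℝ) := hfc.preimage_mem_nhds (hUopen.mem_nhds (hf0 ▸ hx))
  obtain ⟨δ, hδpos, hδ⟩ := Metric.mem_nhds_iff.1 hU0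
  set δ' := min (δ/2) (ε/2) with hδ'def
  have hδ' : 0 < δ' := lt_min (by linarith) (by linarith)
  have hle := hτmax x hx f (ENNReal.ofReal δ') hf0 ?_
  · exact lt_of_lt_of_le (by rwa [ENNReal.ofReal_pos]) hle
  · intro t ht0 htδ
    have htR : t < δ' := by
      rwa [ENNReal.ofReal_lt_ofReal_iff hδ'] at htδ
    have ht1 : t ∈ Ioo (0 - ε) (0 + ε) := by
      constructor
      · have : (0:ℝ) < ε := hε
        calc 0 - ε < 0 := by linarith
        _ ≤ t := ht0
      · have : δ' ≤ ε / 2 := min_le_right _ _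
        calc t < δ' := htR
        _ ≤ ε / 2 := this
        _ < 0 + ε := by linarith
    refine ⟨hfd t ht1, hδ ?_⟩
    rw [Metric.mem_ball, Real.dist_eq, sub_zero, abs_of_nonneg ht0]
    have : δ' ≤ δ / 2 := min_le_left _ _
    linarith

end Calc

section FD3
variable [FiniteDimensional ℝ X]
variable (hC : IsCPCone C) (hen : e ≠ 0) (he : e ∈ C) {rb : ℝ} (hrb : 0 < rb)
    (hball : Metric.ball e rb ⊆ C)
include hC hen he hrb hball

/-- Integral mean value bound: for an achieving pair at `p - q`. -/
theorem pair_apply_le {φ : X → X} (hφ : ContDiff ℝ 1 φ)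
    (hinv : ∀ (x : X) (l : ℝ), φ (x + l • e) = φ x) {U : Set X} (hUconv : Convex ℝ U)
    {b : ℝ} (hb : ∀ x ∈ U, hFun C e (fderiv ℝ φ x) ≤ b)
    {p q : X} (hp : p ∈ U) (hq : q ∈ U) {ν π : X →L[ℝ] ℝ}
    (hν : ν ∈ simplexSet C e) (hπ : π ∈ simplexSet C e)
    (hνv : ν (p - q) = upSlope C e (p - q)) (hπv : π (p - q) = lowSlope C e (p - q)) :
    ν (φ p - φ q) - π (φ p - φ q) ≤ b * hopfOsc C e (p - q) := by
  set v := p - q with hv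
  have hdiff := hφ.differentiable one_ne_zero
  set g : ℝ → X := fun s => φ (q + s • v) with hg
  have hgd : ∀ s ∈ uIcc (0:ℝ) 1, HasDerivAt g (fderiv ℝ φ (q + s • v) v) s := by
    intro s _
    have hline : HasDerivAt (fun s : ℝ => q + s • v) v s := by
      simpa using ((hasDerivAt_id s).smul_const v).const_add q
    exact ((hdiff _).hasFDerivAt).comp_hasDerivAt s hline
  have hcont : Continuous fun s : ℝ => fderiv ℝ φ (q + s • v) v := by
    have h1 : Continuous fun s : ℝ => q + s • v := by continuity
    have h2 := (hφ.continuous_fderiv one_ne_zero).comp h1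
    exact ((ContinuousLinearMap.apply ℝ X v).continuous).comp h2
  have hInt : IntervalIntegrable (fun s => fderiv ℝ φ (q + s • v) v)
      MeasureTheory.volume 0 1 := hcont.intervalIntegrable 0 1
  have hftc : ∫ s in (0:ℝ)..1, fderiv ℝ φ (q + s • v) v = g 1 - g 0 :=
    intervalIntegral.integral_eq_sub_of_hasDerivAt hgd hInt
  have hg1 : g 1 = φ p := by rw [hg]; simp [hv]
  have hg0 : g 0 = φ q := by rw [hg]; simp
  have happly : ∀ μ : X →L[ℝ] ℝ,
      μ (φ p - φ q) = ∫ s in (0:ℝ)..1, μ (fderiv ℝ φ (q + s • v) v) := by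
    intro μ
    rw [← hg1, ← hg0, ← hftc]
    exact (μ.intervalIntegral_comp_comm hInt).symm
  have hintcont : ∀ μ : X →L[ℝ] ℝ,
      IntervalIntegrable (fun s => μ (fderiv ℝ φ (q + s • v) v))
        MeasureTheory.volume 0 1 :=
    fun μ => (μ.continuous.comp hcont).intervalIntegrable 0 1
  rw [happly ν, happly π, ← intervalIntegral.integral_sub (hintcont ν) (hintcont π)]
  have hbound : ∀ s ∈ Icc (0:ℝ) 1,
      ν (fderiv ℝ φ (q + s • v) v) - π (fderiv ℝ φ (q + s • v) v)
        ≤ b * hopfOsc C e v := by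
    intro s hs
    have hmem : q + s • v ∈ U := by
      have := hUconv hq hp (by linarith [hs.2] : (0:ℝ) ≤ 1 - s) hs.1 (by ring)
      rwa [show (1 - s) • q + s • p = q + s • v by rw [hv]; module] at this
    have hL := Pe_sub_apply_le_hFun hC hen he hrb hball (fderiv ℝ φ (q + s • v))
      (fderiv_apply_e_eq_zero hφ hinv _) v hν hπ hνv hπv
    have hble := hb _ hmem
    calc ν (fderiv ℝ φ (q + s • v) v) - π (fderiv ℝ φ (q + s • v) v)
        ≤ hFun C e (fderiv ℝ φ (q + s • v)) * hopfOsc C e v := hL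
    _ ≤ b * hopfOsc C e v :=
        mul_le_mul_of_nonneg_right hble (hopfOsc_nonneg hC hen he hrb hball v)
  calc ∫ s in (0:ℝ)..1, (ν (fderiv ℝ φ (q + s • v) v) - π (fderiv ℝ φ (q + s • v) v))
      ≤ ∫ _ in (0:ℝ)..1, b * hopfOsc C e v := by
        refine intervalIntegral.integral_mono_on zero_le_one
          ((hintcont ν).sub (hintcont π)) intervalIntegrable_const hbound
  _ = b * hopfOsc C e v := by simp

/-- Hopf oscillation is Lipschitz, hence continuous. -/
theorem hopfOsc_continuous : Continuous (hopfOsc C e) := by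
  have hlip : LipschitzWith (Real.toNNReal (2 / rb)) (hopfOsc C e) := by
    refine LipschitzWith.of_dist_le_mul fun a b₀ => ?_
    rw [Real.dist_eq, Real.coe_toNNReal _ (by positivity), dist_eq_norm]
    rw [abs_le]
    constructor
    · have := hopfOsc_sub_le hC hen he hrb hball b₀ a
      rw [norm_sub_rev a b₀] at *
      linarith
    · exact hopfOsc_sub_le hC hen he hrb hball a b₀
  exact hlip.continuous

/-- The Grönwall-type contraction estimate. -/
theorem contraction_of_hFun_le {φ : X → X} (hφ : ContDiff ℝ 1 φ)
    (hinv : ∀ (x : X) (l : ℝ), φ (x + l • e) = φ x)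
    {U : Set X} (hUconv : Convex ℝ U)
    {M : ℝ → X → X} {τ : X → ℝ≥0∞}
    (hMder : ∀ x ∈ U, ∀ t : ℝ, 0 ≤ t → ENNReal.ofReal t < τ x →
        HasDerivAt (fun s : ℝ => M s x) (φ (M t x)) t)
    (hMmem : ∀ x ∈ U, ∀ t : ℝ, 0 ≤ t → ENNReal.ofReal t < τ x → M t x ∈ U)
    {b : ℝ} (hb : ∀ x ∈ U, hFun C e (fderiv ℝ φ x) ≤ b)
    {x y : X} (hx : x ∈ U) (hy : y ∈ U) {T : ℝ} (hT0 : 0 ≤ T)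
    (hT : ENNReal.ofReal T < min (τ x) (τ y)) :
    hopfOsc C e (M T x - M T y) ≤ Real.exp (b * T) * hopfOsc C e (M 0 x - M 0 y) := by
  set w : ℝ → X := fun t => M t x - M t y with hw
  set f : ℝ → ℝ := fun t => hopfOsc C e (w t) with hf
  have hτx : ∀ t : ℝ, 0 ≤ t → t ≤ T → ENNReal.ofReal t < τ x := fun t _ htT =>
    lt_of_le_of_lt (ENNReal.ofReal_le_ofReal htT) (lt_min_iff.1 hT).1
  have hτy : ∀ t : ℝ, 0 ≤ t → t ≤ T → ENNReal.ofReal t < τ y := fun t _ htT =>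
    lt_of_le_of_lt (ENNReal.ofReal_le_ofReal htT) (lt_min_iff.1 hT).2
  have hwd : ∀ t ∈ Icc 0 T, HasDerivAt w (φ (M t x) - φ (M t y)) t := fun t ht =>
    (hMder x hx t ht.1 (hτx t ht.1 ht.2)).sub (hMder y hy t ht.1 (hτy t ht.1 ht.2))
  have hmemx : ∀ t ∈ Icc 0 T, M t x ∈ U := fun t ht => hMmem x hx t ht.1 (hτx t ht.1 ht.2)
  have hmemy : ∀ t ∈ Icc 0 T, M t y ∈ U := fun t ht => hMmem y hy t ht.1 (hτy t ht.1 ht.2)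
  have hwc : ContinuousOn w (Icc 0 T) := fun t ht =>
    ((hwd t ht).continuousAt).continuousWithinAt
  have hfc : ContinuousOn f (Icc 0 T) :=
    (hopfOsc_continuous hC hen he hrb hball).comp_continuousOn hwc
  -- the liminf condition for Gronwall
  have hf' : ∀ t ∈ Ico 0 T, ∀ r, b * f t < r →
      ∃ᶠ z in nhdsWithin t (Ioi t), (z - t)⁻¹ * (f z - f t) < r := by
    intro t ht r hr
    have htIcc : t ∈ Icc 0 T := ⟨ht.1, ht.2.le⟩
    set d := φ (M t x) - φ (M t y) with hd
    -- tendsto facts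
    have keyA : Filter.Tendsto (slope w t) (nhdsWithin t (Ioi t)) (nhds d) :=
      ((hasDerivAt_iff_tendsto_slope).1 (hwd t htIcc)).mono_left
        (nhdsWithin_mono t fun z hz => ne_of_gt hz)
    have hMxcont : ContinuousAt (fun z => M z x) t :=
      (hMder x hx t ht.1 (hτx t ht.1 ht.2.le)).continuousAt
    have hMycont : ContinuousAt (fun z => M z y) t :=
      (hMder y hy t ht.1 (hτy t ht.1 ht.2.le)).continuousAt
    have keyB : Filter.Tendsto (fun z => φ (M z x) - φ (M z y))
        (nhdsWithin t (Ioi t)) (nhds d) := by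
      have h1 : ContinuousAt (fun z => φ (M z x) - φ (M z y)) t :=
        ((hφ.continuous.continuousAt.comp hMxcont).sub
          (hφ.continuous.continuousAt.comp hMycont))
      exact h1.continuousWithinAt.tendsto
    have keyf : Filter.Tendsto f (nhdsWithin t (Ioi t)) (nhds (f t)) := by
      have h1 : ContinuousAt w t := (hwd t htIcc).continuousAt
      exact (((hopfOsc_continuous hC hen he hrb hball).continuousAt).comp
        h1).continuousWithinAt.tendsto
    -- majorant
    set G : ℝ → ℝ := fun z => b * f z +
      (2 / rb) * (‖slope w t z - d‖ + ‖(φ (M z x) - φ (M z y)) - d‖) with hG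
    have keyG : Filter.Tendsto G (nhdsWithin t (Ioi t))
        (nhds (b * f t + (2 / rb) * (0 + 0))) := by
      refine Filter.Tendsto.add (keyf.const_mul b) (Filter.Tendsto.const_mul _ ?_)
      refine Filter.Tendsto.add ?_ ?_
      · have h0 : Filter.Tendsto (fun z => slope w t z - d) (nhdsWithin t (Ioi t))
            (nhds (d - d)) := keyA.sub tendsto_const_nhds
        rw [sub_self] at h0
        simpa using h0.norm
      · have h0 : Filter.Tendsto (fun z => (φ (M z x) - φ (M z y)) - d)
            (nhdsWithin t (Ioi t)) (nhds (d - d)) := keyB.sub tendsto_const_nhds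
        rw [sub_self] at h0
        simpa using h0.norm
    have hGlim : b * f t + (2 / rb) * (0 + 0) = b * f t := by ring
    rw [hGlim] at keyG
    have hev1 : ∀ᶠ z in nhdsWithin t (Ioi t), G z < r := keyG.eventually_lt_const hr
    have hev2 : ∀ᶠ z in nhdsWithin t (Ioi t), z ∈ Ioo t T :=
      Ioo_mem_nhdsGT_of_mem ⟨le_refl t, ht.2⟩
    have hev : ∀ᶠ z in nhdsWithin t (Ioi t), (z - t)⁻¹ * (f z - f t) < r := by
      filter_upwards [hev1, hev2] with z hGz hzIoo
      refine lt_of_le_of_lt ?_ hGz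
      -- pointwise estimate
      have hzIcc : z ∈ Icc 0 T := ⟨le_trans ht.1 hzIoo.1.le, hzIoo.2.le⟩
      have hzt : 0 < z - t := by linarith [hzIoo.1]
      obtain ⟨ν, hν, hνw⟩ := exists_Pe_eq_upSlope hC hen he hrb hball (w z)
      obtain ⟨π, hπ, hπw⟩ := exists_Pe_eq_lowSlope hC hen he hrb hball (w z)
      have hfz : f z = ν (w z) - π (w z) := by
        rw [hf]; unfold hopfOsc; rw [hνw, hπw]
      have hft : ν (w t) - π (w t) ≤ f t :=
        Pe_apply_sub_le_hopfOsc hC hen he hrb hball hν hπ (w t)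
      have hstep1 : f z - f t ≤ (z - t) * ((ν - π) (slope w t z)) := by
        have h1 : f z - f t ≤ (ν - π) (w z - w t) := by
          simp only [ContinuousLinearMap.sub_apply, map_sub]
          linarith [hfz, hft]
        have h2 : (ν - π) (w z - w t) = (z - t) * ((ν - π) (slope w t z)) := by
          rw [slope_def_module, map_smul, smul_eq_mul]
          field_simp
        linarith [h1, h2.symm.le, h2.le]
      have hquot : (z - t)⁻¹ * (f z - f t) ≤ (ν - π) (slope w t z) := by
        rw [show (ν - π) (slope w t z) = (z - t)⁻¹ * ((z - t) * ((ν - π) (slope w t z)))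
          by field_simp]
        exact mul_le_mul_of_nonneg_left hstep1 (inv_nonneg.2 hzt.le)
      -- decompose
      set Bz := φ (M z x) - φ (M z y) with hBz
      have hsplit : (ν - π) (slope w t z) = (ν - π) Bz + (ν - π) (slope w t z - Bz) := by
        rw [← map_add]; congr 1; abel
      have hINT : (ν - π) Bz ≤ b * f z := by
        have hwz : w z = M z x - M z y := rfl
        have h := pair_apply_le hC hen he hrb hball hφ hinv hUconv hb
          (hmemx z hzIcc) (hmemy z hzIcc) hν hπ (by rw [← hwz]; exact hνw)
          (by rw [← hwz]; exact hπw)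
        simpa only [ContinuousLinearMap.sub_apply, ← hwz] using h
      have herr : (ν - π) (slope w t z - Bz) ≤
          (2 / rb) * (‖slope w t z - d‖ + ‖Bz - d‖) := by
        have h1 : |ν (slope w t z - Bz)| ≤ ‖slope w t z - Bz‖ / rb :=
          Pe_abs_apply_le hC hen he hrb hball hν _
        have h2 : |π (slope w t z - Bz)| ≤ ‖slope w t z - Bz‖ / rb :=
          Pe_abs_apply_le hC hen he hrb hball hπ _
        have h3 : ‖slope w t z - Bz‖ ≤ ‖slope w t z - d‖ + ‖Bz - d‖ := by
          have : slope w t z - Bz = (slope w t z - d) - (Bz - d) := by abel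
          rw [this]
          exact norm_sub_le _ _
        have h4 : (ν - π) (slope w t z - Bz) ≤ 2 * (‖slope w t z - Bz‖ / rb) := by
          simp only [ContinuousLinearMap.sub_apply]
          have := abs_le.1 h1
          have := abs_le.1 h2
          linarith [(abs_le.1 h1).2, (abs_le.1 h2).1]
        calc (ν - π) (slope w t z - Bz) ≤ 2 * (‖slope w t z - Bz‖ / rb) := h4
        _ ≤ 2 * ((‖slope w t z - d‖ + ‖Bz - d‖) / rb) := by gcongr
        _ = (2 / rb) * (‖slope w t z - d‖ + ‖Bz - d‖) := by ring
      calc (z - t)⁻¹ * (f z - f t) ≤ (ν - π) (slope w t z) := hquot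
      _ = (ν - π) Bz + (ν - π) (slope w t z - Bz) := hsplit
      _ ≤ b * f z + (2 / rb) * (‖slope w t z - d‖ + ‖Bz - d‖) := add_le_add hINT herr
      _ = G z := by rw [hG]
    exact hev.frequently
  have hgron := le_gronwallBound_of_liminf_deriv_right_le (f := f)
    (f' := fun t => b * f t) (δ := f 0) (K := b) (ε := 0) (a := 0) (b := T)
    hfc hf' (le_refl _) (fun t _ => by simp)
  have hTmem : T ∈ Icc (0:ℝ) T := ⟨hT0, le_refl T⟩
  have := hgron T hTmem
  rw [sub_zero, gronwallBound_ε0] at this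
  calc hopfOsc C e (M T x - M T y) = f T := rfl
  _ ≤ f 0 * Real.exp (b * T) := this
  _ = Real.exp (b * T) * hopfOsc C e (M 0 x - M 0 y) := by rw [hf, hw]; ring

end FD3

theorem deriv_nonneg_of_nonneg_right {F : ℝ → ℝ} {d : ℝ} (hF : HasDerivAt F d 0)
    (hF0 : F 0 = 0) {δ : ℝ} (hδ : 0 < δ) (hpos : ∀ t ∈ Ioo (0:ℝ) δ, 0 ≤ F t) : 0 ≤ d := by
  have hmono : nhdsWithin (0:ℝ) (Ioi 0) ≤ nhdsWithin 0 {0}ᶜ :=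
    nhdsWithin_mono _ (fun z hz => ne_of_gt hz)
  have hs := (hasDerivAt_iff_tendsto_slope.1 hF).mono_left hmono
  refine ge_of_tendsto hs ?_
  filter_upwards [Ioo_mem_nhdsGT_of_mem ⟨le_refl (0:ℝ), hδ⟩] with z hz
  rw [slope_def_field, hF0, sub_zero, sub_zero]
  exact div_nonneg (hpos z hz) hz.1.le

theorem exists_pos_ofReal_lt {m : ℝ≥0∞} (hm : 0 < m) :
    ∃ δ : ℝ, 0 < δ ∧ ∀ t : ℝ, 0 ≤ t → t < δ → ENNReal.ofReal t < m := by
  rcases eq_or_ne m ⊤ with rfl | hne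
  · exact ⟨1, one_pos, fun t _ _ => ENNReal.ofReal_lt_top⟩
  · refine ⟨m.toReal, ENNReal.toReal_pos hm.ne' hne, fun t ht0 htδ => ?_⟩
    rw [← ENNReal.ofReal_toReal hne]
    exact (ENNReal.ofReal_lt_ofReal_iff (ENNReal.toReal_pos hm.ne' hne)).2 htδ

section FD4
variable [FiniteDimensional ℝ X]
variable (hC : IsCPCone C) (hen : e ≠ 0) (he : e ∈ C) {rb : ℝ} (hrb : 0 < rb)
    (hball : Metric.ball e rb ⊆ C)
include hC hen he hrb hball

/-- The linearization direction: any valid contraction rate `β` dominates the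
value of the linear functional on each feasible triple. -/
theorem beta_ge_of_feasible {φ : X → X} (hφ : ContDiff ℝ 1 φ)
    (hinv : ∀ (x : X) (l : ℝ), φ (x + l • e) = φ x)
    {U : Set X} (hUopen : IsOpen U)
    {M : ℝ → X → X} {τ : X → ℝ≥0∞}
    (hM0 : ∀ x ∈ U, M 0 x = x)
    (hMder : ∀ x ∈ U, ∀ t : ℝ, 0 ≤ t → ENNReal.ofReal t < τ x →
        HasDerivAt (fun s : ℝ => M s x) (φ (M t x)) t)
    (hτpos : ∀ x ∈ U, 0 < τ x)
    {β : ℝ}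
    (hβ : ∀ x ∈ U, ∀ y ∈ U, ∀ t : ℝ, 0 ≤ t → ENNReal.ofReal t < min (τ x) (τ y) →
        hopfOsc C e (M t x - M t y) ≤ Real.exp (β * t) * hopfOsc C e (x - y))
    {x₀ : X} (hx₀ : x₀ ∈ U)
    {ν π : X →L[ℝ] ℝ} {xe : X} (hν : ν ∈ simplexSet C e) (hπ : π ∈ simplexSet C e)
    (hxe : xe ∈ orderIntv C e) (hcon : ν xe + π (e - xe) = 0) :
    -(ν (fderiv ℝ φ x₀ xe) + π (fderiv ℝ φ x₀ (e - xe))) ≤ β := by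
  classical
  set L := fderiv ℝ φ x₀ with hL
  have hLe : L e = 0 := fderiv_apply_e_eq_zero hφ hinv x₀
  set u := e - xe with hu
  obtain ⟨hup, hlow, hνu, hπu, hνxe⟩ :=
    feasible_facts hC hen he hrb hball hν hπ hxe hcon
  have hgoal_eq : -(ν (L xe) + π (L (e - xe))) = ν (L u) - π (L u) := by
    have h1 : L xe = - L u := by
      rw [hu, map_sub, hLe, zero_sub, neg_neg]
    rw [h1, map_neg, ← hu]; ring
  rw [hgoal_eq]
  -- choose ε₀ so that x₀ - ε • u ∈ U
  obtain ⟨ρ, hρpos, hρ⟩ := Metric.isOpen_iff.1 hUopen x₀ hx₀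
  set ε₀ := ρ / (‖u‖ + 1) with hε₀def
  have hε₀pos : 0 < ε₀ := div_pos hρpos (by positivity)
  have hyU : ∀ ε : ℝ, 0 < ε → ε < ε₀ → x₀ - ε • u ∈ U := by
    intro ε hε hεlt
    apply hρ
    rw [Metric.mem_ball, dist_eq_norm, show x₀ - ε • u - x₀ = -(ε • u) by abel, norm_neg,
      norm_smul, Real.norm_eq_abs, abs_of_pos hε]
    calc ε * ‖u‖ ≤ ε * (‖u‖ + 1) := by nlinarith [norm_nonneg u]
    _ < ε₀ * (‖u‖ + 1) := by nlinarith [norm_nonneg u]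
    _ = ρ := by rw [hε₀def]; field_simp
  -- Claim A
  have claimA : ∀ ε : ℝ, 0 < ε → ε < ε₀ →
      (ν - π) (φ x₀ - φ (x₀ - ε • u)) ≤ β * ε := by
    intro ε hε hεlt
    set y := x₀ - ε • u with hy
    have hyU' : y ∈ U := hyU ε hε hεlt
    have hmm : 0 < min (τ x₀) (τ y) := lt_min (hτpos x₀ hx₀) (hτpos y hyU')
    obtain ⟨δ, hδpos, hδ⟩ := exists_pos_ofReal_lt hmm
    have hoscu : hopfOsc C e u = 1 := by unfold hopfOsc; rw [hup, hlow]; ring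
    have hoscxy : hopfOsc C e (x₀ - y) = ε := by
      rw [hy, show x₀ - (x₀ - ε • u) = ε • u by abel,
        hopfOsc_smul hC hen he hrb hball hε, hoscu, mul_one]
    set F : ℝ → ℝ := fun t => Real.exp (β * t) * ε - (ν - π) (M t x₀ - M t y) with hF
    have hτ0x : ENNReal.ofReal 0 < τ x₀ := by simpa using hτpos x₀ hx₀
    have hτ0y : ENNReal.ofReal 0 < τ y := by simpa using hτpos y hyU'
    have hwder : HasDerivAt (fun t => M t x₀ - M t y) (φ x₀ - φ y) 0 := by
      have h1 := hMder x₀ hx₀ 0 (le_refl 0) hτ0x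
      have h2 := hMder y hyU' 0 (le_refl 0) hτ0y
      rw [hM0 x₀ hx₀] at h1
      rw [hM0 y hyU'] at h2
      exact h1.sub h2
    have hFder : HasDerivAt F (β * Real.exp (β * 0) * ε - (ν - π) (φ x₀ - φ y)) 0 := by
      refine HasDerivAt.sub ?_ ?_
      · have h1 : HasDerivAt (fun t : ℝ => β * t) β 0 := by
          simpa using (hasDerivAt_id (0:ℝ)).const_mul β
        have h2 := (Real.hasDerivAt_exp (β * 0)).comp 0 h1
        simpa [mul_comm] using h2.mul_const ε
      · exact ((ν - π).hasFDerivAt.comp_hasDerivAt 0 hwder)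
    have hF0 : F 0 = 0 := by
      rw [hF]
      simp only [mul_zero, Real.exp_zero, one_mul]
      rw [hM0 x₀ hx₀, hM0 y hyU']
      have : (ν - π) (x₀ - y) = ε := by
        rw [hy, show x₀ - (x₀ - ε • u) = ε • u by abel, map_smul, smul_eq_mul]
        simp only [ContinuousLinearMap.sub_apply]
        rw [hνu, hπu]; ring
      rw [this]; ring
    have hFpos : ∀ t ∈ Ioo (0:ℝ) δ, 0 ≤ F t := by
      intro t ht
      have hβt := hβ x₀ hx₀ y hyU' t ht.1.le (hδ t ht.1.le ht.2)
      have hosc := Pe_apply_sub_le_hopfOsc hC hen he hrb hball hν hπ (M t x₀ - M t y)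
      rw [hoscxy] at hβt
      rw [hF]
      simp only [ContinuousLinearMap.sub_apply] at *
      linarith
    have := deriv_nonneg_of_nonneg_right hFder hF0 hδpos hFpos
    have hexp0 : β * Real.exp (β * 0) * ε = β * ε := by
      rw [mul_zero, Real.exp_zero]; ring
    rw [hexp0] at this
    linarith
  -- Claim B
  set G : ℝ → ℝ := fun ε => β * ε - (ν - π) (φ x₀ - φ (x₀ - ε • u)) with hG
  have hGder : HasDerivAt G (β - (ν - π) (L u)) 0 := by
    have hline : HasDerivAt (fun ε : ℝ => x₀ - ε • u) (-u) 0 := by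
      have h1 : HasDerivAt (fun ε : ℝ => ε • u) u 0 := by
        simpa using (hasDerivAt_id (0:ℝ)).smul_const u
      simpa using (h1.const_sub x₀)
    have hφder : HasFDerivAt φ L ((fun ε : ℝ => x₀ - ε • u) 0) := by
      have : (fun ε : ℝ => x₀ - ε • u) 0 = x₀ := by simp
      rw [this, hL]
      exact ((hφ.differentiable one_ne_zero) x₀).hasFDerivAt
    have hcomp : HasDerivAt (fun ε : ℝ => φ (x₀ - ε • u)) (L (-u)) 0 :=
      hφder.comp_hasDerivAt 0 hline
    have hinner : HasDerivAt (fun ε : ℝ => φ x₀ - φ (x₀ - ε • u)) (L u) 0 := by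
      have := hcomp.const_sub (φ x₀)
      rwa [show -(L (-u)) = L u by rw [map_neg, neg_neg]] at this
    have houter : HasDerivAt (fun ε : ℝ => (ν - π) (φ x₀ - φ (x₀ - ε • u)))
        ((ν - π) (L u)) 0 := (ν - π).hasFDerivAt.comp_hasDerivAt 0 hinner
    have hlin : HasDerivAt (fun ε : ℝ => β * ε) β 0 := by
      simpa using (hasDerivAt_id (0:ℝ)).const_mul β
    exact hlin.sub houter
  have hG0 : G 0 = 0 := by
    rw [hG]
    simp
  have hGpos : ∀ ε ∈ Ioo (0:ℝ) ε₀, 0 ≤ G ε := by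
    intro ε hε
    have := claimA ε hε.1 hε.2
    rw [hG]
    simp only [ContinuousLinearMap.sub_apply] at *
    linarith
  have := deriv_nonneg_of_nonneg_right hGder hG0 hε₀pos hGpos
  simp only [ContinuousLinearMap.sub_apply] at this ⊢
  linarith

end FD4

end HopfAux

open scoped ENNReal

theorem nonlinear_flow_hopf_contraction_rate
    {X : Type*} [NormedAddCommGroup X] [NormedSpace ℝ X] [FiniteDimensional ℝ X]
    (C : Set X) (e : X) (hC : IsCPCone C) (he : e ∈ interior C)
    (φ : X → X) (hφ : ContDiff ℝ 1 φ)
    (hinv : ∀ (x : X) (l : ℝ), φ (x + l • e) = φ x)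
    (U : Set X) (hUopen : IsOpen U) (hUconv : Convex ℝ U)
    (M : ℝ → X → X) (τ : X → ℝ≥0∞)
    (hM0 : ∀ x ∈ U, M 0 x = x)
    (hMder : ∀ x ∈ U, ∀ t : ℝ, 0 ≤ t → ENNReal.ofReal t < τ x →
        HasDerivAt (fun s : ℝ => M s x) (φ (M t x)) t)
    (hMmem : ∀ x ∈ U, ∀ t : ℝ, 0 ≤ t → ENNReal.ofReal t < τ x → M t x ∈ U)
    (hτmax : ∀ x ∈ U, ∀ (γ : ℝ → X) (s : ℝ≥0∞), γ 0 = x →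
        (∀ t : ℝ, 0 ≤ t → ENNReal.ofReal t < s → HasDerivAt γ (φ (γ t)) t ∧ γ t ∈ U) →
        s ≤ τ x) :
    sInf {β : ℝ | ∀ x ∈ U, ∀ y ∈ U, ∀ t : ℝ, 0 ≤ t → ENNReal.ofReal t < min (τ x) (τ y) →
        hopfOsc C e (M t x - M t y) ≤ Real.exp (β * t) * hopfOsc C e (x - y)} =
      sSup {r : ℝ | ∃ x ∈ U, r = hFun C e (fderiv ℝ φ x)} := by
  classical
  open HopfAux Set in
  obtain ⟨rb, hrb, hball⟩ : ∃ r > 0, Metric.ball e r ⊆ C := by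
    rw [mem_interior_iff_mem_nhds] at he
    exact Metric.mem_nhds_iff.1 he
  have heC : e ∈ C := hball (Metric.mem_ball_self hrb)
  rcases U.eq_empty_or_nonempty with hU | hUne
  · -- empty domain: both sides are junk 0
    have hSuniv : {β : ℝ | ∀ x ∈ U, ∀ y ∈ U, ∀ t : ℝ, 0 ≤ t →
        ENNReal.ofReal t < min (τ x) (τ y) →
        hopfOsc C e (M t x - M t y) ≤ Real.exp (β * t) * hopfOsc C e (x - y)} = univ := by
      refine eq_univ_of_forall fun β => ?_
      intro x hx
      rw [hU] at hx
      exact absurd hx (Set.notMem_empty x)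
    have hRempty : {r : ℝ | ∃ x ∈ U, r = hFun C e (fderiv ℝ φ x)} = ∅ := by
      rw [eq_empty_iff_forall_notMem]
      rintro r ⟨x, hx, -⟩
      rw [hU] at hx
      exact Set.notMem_empty x hx
    rw [hSuniv, hRempty, Real.sSup_empty, Real.sInf_of_not_bddBelow not_bddBelow_univ]
  · by_cases hosc : ∀ v : X, hopfOsc C e v = 0
    · -- degenerate geometry: both sides are 0
      have hSuniv : {β : ℝ | ∀ x ∈ U, ∀ y ∈ U, ∀ t : ℝ, 0 ≤ t →
          ENNReal.ofReal t < min (τ x) (τ y) →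
          hopfOsc C e (M t x - M t y) ≤ Real.exp (β * t) * hopfOsc C e (x - y)} = univ := by
        refine eq_univ_of_forall fun β => ?_
        intro x _ y _ t _ _
        rw [hosc (M t x - M t y), hosc (x - y), mul_zero]
      have hTempty : ∀ L : X →L[ℝ] X, Tset C e L = ∅ := by
        intro L
        rw [eq_empty_iff_forall_notMem]
        rintro r ⟨ν, hν, π, hπ, xe, hxe, hcon, -⟩
        by_cases hen : e = 0
        · have : ν e = 1 := hν.1.2
          rw [hen, map_zero] at this
          exact one_ne_zero this.symm
        · obtain ⟨hup, hlow, -, -, -⟩ :=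
            feasible_facts hC hen heC hrb hball hν.1 hπ.1 hxe.1 hcon
          have h1 := hosc (e - xe)
          unfold hopfOsc at h1
          rw [hup, hlow] at h1
          norm_num at h1
      have hRzero : {r : ℝ | ∃ x ∈ U, r = hFun C e (fderiv ℝ φ x)} = {0} := by
        ext r
        simp only [Set.mem_setOf_eq, Set.mem_singleton_iff]
        constructor
        · rintro ⟨x, hx, rfl⟩
          rw [hFun_eq, hTempty, Real.sInf_empty, neg_zero]
        · rintro rfl
          obtain ⟨x₀, hx₀⟩ := hUne
          exact ⟨x₀, hx₀, by rw [hFun_eq, hTempty, Real.sInf_empty, neg_zero]⟩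
      rw [hSuniv, hRzero, csSup_singleton, Real.sInf_of_not_bddBelow not_bddBelow_univ]
    · -- main case
      push_neg at hosc
      obtain ⟨w₀, hw₀ne⟩ := hosc
      have hen : e ≠ 0 := by
        intro hen
        apply hw₀ne
        have hA : Aset C e w₀ = univ := by
          refine eq_univ_of_forall fun t => ?_
          have := mem_Aset_of_lt hC hrb hball w₀ (lt_add_one (‖w₀‖ / rb))
          rw [Aset, Set.mem_setOf_eq, hen, smul_zero] at this ⊢
          exact this
        have hB : Bset C e w₀ = univ := by
          refine eq_univ_of_forall fun t => ?_
          have := mem_Bset_of_lt hC hrb hball w₀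
            (show -(‖w₀‖ / rb) - 1 < -(‖w₀‖ / rb) by linarith)
          rw [Bset, Set.mem_setOf_eq, hen, smul_zero] at this ⊢
          exact this
        unfold hopfOsc upSlope lowSlope
        rw [show {t : ℝ | t • e - w₀ ∈ C} = Aset C e w₀ from rfl,
          show {t : ℝ | w₀ - t • e ∈ C} = Bset C e w₀ from rfl, hA, hB,
          Real.sInf_of_not_bddBelow not_bddBelow_univ, Real.sSup_of_not_bddAbove
          not_bddAbove_univ, sub_zero]
      have hw₀pos : 0 < hopfOsc C e w₀ :=
        lt_of_le_of_ne (hopfOsc_nonneg hC hen heC hrb hball w₀) (Ne.symm hw₀ne)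
      have hτpos : ∀ x ∈ U, 0 < τ x := fun x hx => tau_pos hφ hUopen hτmax hx
      have hTsetNE : ∀ L : X →L[ℝ] X, L e = 0 → (Tset C e L).Nonempty := by
        intro L hLe
        obtain ⟨ν, hν, hνw⟩ := exists_Pe_eq_upSlope hC hen heC hrb hball w₀
        obtain ⟨π, hπ, hπw⟩ := exists_Pe_eq_lowSlope hC hen heC hrb hball w₀
        obtain ⟨r, hrT, -⟩ := exists_extreme_triple hC hen heC hrb hball L hLe hw₀pos
          hν hπ hνw hπw
        exact ⟨r, hrT⟩
      set S := {β : ℝ | ∀ x ∈ U, ∀ y ∈ U, ∀ t : ℝ, 0 ≤ t →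
          ENNReal.ofReal t < min (τ x) (τ y) →
          hopfOsc C e (M t x - M t y) ≤ Real.exp (β * t) * hopfOsc C e (x - y)} with hSdef
      set R := {r : ℝ | ∃ x ∈ U, r = hFun C e (fderiv ℝ φ x)} with hRdef
      have haux : ∀ β ∈ S, ∀ x' ∈ U, hFun C e (fderiv ℝ φ x') ≤ β := by
        intro β hβ x' hx'
        have hLe := fderiv_apply_e_eq_zero (e := e) hφ hinv x'
        rw [hFun_eq, neg_le]
        refine le_csInf (hTsetNE _ hLe) ?_
        rintro r ⟨ν, hν, π, hπ, xe, hxe, hcon, rfl⟩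
        have hge := beta_ge_of_feasible hC hen heC hrb hball hφ hinv hUopen hM0 hMder
          hτpos hβ hx' hν.1 hπ.1 hxe.1 hcon
        linarith
      have hbS : ∀ b : ℝ, (∀ x' ∈ U, hFun C e (fderiv ℝ φ x') ≤ b) → b ∈ S := by
        intro b hb
        intro x hxU y hyU t ht0 htlt
        have := HopfAux.contraction_of_hFun_le hC hen heC hrb hball hφ hinv hUconv hMder hMmem
          hb hxU hyU ht0 htlt
        rwa [hM0 x hxU, hM0 y hyU] at this
      obtain ⟨x₀, hx₀⟩ := hUne
      have hRne : R.Nonempty := ⟨_, x₀, hx₀, rfl⟩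
      by_cases hRb : BddAbove R
      · have hαS : sSup R ∈ S := hbS _ (fun x' hx' => le_csSup hRb ⟨x', hx', rfl⟩)
        have hSbdd : BddBelow S :=
          ⟨hFun C e (fderiv ℝ φ x₀), fun β hβ => haux β hβ x₀ hx₀⟩
        refine le_antisymm (csInf_le hSbdd hαS) ?_
        refine le_csInf ⟨_, hαS⟩ fun β hβ => ?_
        exact csSup_le hRne (by rintro r ⟨x', hx', rfl⟩; exact haux β hβ x' hx')
      · have hSempty : S = ∅ := by
          rw [eq_empty_iff_forall_notMem]
          intro β hβ
          exact hRb ⟨β, by rintro r ⟨x', hx', rfl⟩; exact haux β hβ x' hx'⟩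
        rw [hSempty, Real.sInf_empty, Real.sSup_of_not_bddAbove hRb]
end

section
/- Let φ : (0,∞)ⁿ → ℝⁿ be continuously differentiable with φ(λx) = λφ(x) for all λ > 0, let M_t denote the (local) flow of ẋ = φ(x), and let U ⊆ (0,∞)ⁿ be a convex open set with λU = U for all λ > 0. Then the optimal contraction rate of the flow in Hilbert's projective metric, α(U) = inf{α ∈ ℝ : d_H(M_t(x₁), M_t(x₂)) ≤ e^{αt} d_H(x₁,x₂) for all x₁, x₂ ∈ U, 0 ≤ t < t_U(x₁) ∧ t_U(x₂)}, equals sup_{x ∈ U} h(δ(x)⁻¹ Dφ(x) δ(x)), where δ(x) is the diagonal matrix with diagonal x and h(A) = −min_{i≠j} (A_{ji} + A_{ij} + Σ_{k∉{i,j}} min(A_{ik}, A_{jk})). -/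
open scoped ENNReal Pointwise

noncomputable section

/-- Hilbert's projective metric on the interior `(0,∞)ⁿ` of the standard positive cone:
`d_H(x,y) = log (max_i (x_i/y_i) / min_i (x_i/y_i))`. -/
def hilbertDistRn (n : ℕ) (x y : Fin n → ℝ) : ℝ :=
  Real.log (sSup {r : ℝ | ∃ i : Fin n, r = x i / y i} /
    sInf {r : ℝ | ∃ i : Fin n, r = x i / y i})

/-- The matrix `δ(x)⁻¹ Dφ(x) δ(x)`, where `δ(x)` is the diagonal matrix with diagonal `x`
and `Dφ(x)` is the Jacobian matrix of `φ` at `x`. -/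
def conjJacobian (n : ℕ) (φ : (Fin n → ℝ) → Fin n → ℝ) (x : Fin n → ℝ)
    (i j : Fin n) : ℝ :=
  fderiv ℝ φ x (Pi.single j 1) i * x j / x i

/-- The contraction rate functional `h(A)` for a matrix `A`. -/
def hMat (n : ℕ) (A : Fin n → Fin n → ℝ) : ℝ :=
  - sInf {r : ℝ | ∃ i j : Fin n, i ≠ j ∧
      r = A j i + A i j + ∑ k ∈ Finset.univ \ {i, j}, min (A i k) (A j k)}

/-- The open positive orthant, i.e. the interior of the standard positive cone of `ℝⁿ`. -/
def posOrthant (n : ℕ) : Set (Fin n → ℝ) := {x | ∀ i, 0 < x i}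

end

section Basic

variable {n : ℕ}

lemma ratio_set_eq (x y : Fin n → ℝ) :
    {r : ℝ | ∃ i : Fin n, r = x i / y i} = Set.range (fun i => x i / y i) := by
  ext r; simp [eq_comm]

lemma hilbert_bounds (hn : 0 < n) {x y : Fin n → ℝ} (hx : x ∈ posOrthant n)
    (hy : y ∈ posOrthant n) :
    ∃ i j : Fin n, (∀ k, x k / y k ≤ x i / y i) ∧ (∀ k, x j / y j ≤ x k / y k) ∧
      hilbertDistRn n x y =
        (Real.log (x i) - Real.log (y i)) - (Real.log (x j) - Real.log (y j)) := by
  have : Nonempty (Fin n) := ⟨⟨0, hn⟩⟩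
  set S := {r : ℝ | ∃ i : Fin n, r = x i / y i} with hS
  have hSr : S = Set.range (fun i => x i / y i) := ratio_set_eq x y
  have hfin : S.Finite := hSr ▸ Set.finite_range _
  have hne : S.Nonempty := hSr ▸ Set.range_nonempty _
  obtain ⟨i, hi⟩ : ∃ i : Fin n, sSup S = x i / y i := by
    have := hne.csSup_mem hfin; rw [hS] at this; exact this
  obtain ⟨j, hj⟩ : ∃ j : Fin n, sInf S = x j / y j := by
    have := hne.csInf_mem hfin; rw [hS] at this; exact this
  refine ⟨i, j, ?_, ?_, ?_⟩
  · intro k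
    rw [← hi]
    exact le_csSup hfin.bddAbove ⟨k, rfl⟩
  · intro k
    rw [← hj]
    exact csInf_le hfin.bddBelow ⟨k, rfl⟩
  · have hxiyi : 0 < x i / y i := div_pos (hx i) (hy i)
    have hxjyj : 0 < x j / y j := div_pos (hx j) (hy j)
    unfold hilbertDistRn
    rw [← hS, hi, hj, Real.log_div (ne_of_gt hxiyi) (ne_of_gt hxjyj),
      Real.log_div (ne_of_gt (hx i)) (ne_of_gt (hy i)),
      Real.log_div (ne_of_gt (hx j)) (ne_of_gt (hy j))]

lemma hilbert_ge_pair (hn : 0 < n) {x y : Fin n → ℝ} (hx : x ∈ posOrthant n)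
    (hy : y ∈ posOrthant n) (i j : Fin n) :
    (Real.log (x i) - Real.log (y i)) - (Real.log (x j) - Real.log (y j)) ≤
      hilbertDistRn n x y := by
  obtain ⟨i', j', hmax, hmin, heq⟩ := hilbert_bounds hn hx hy
  rw [heq]
  have h1 : x i / y i ≤ x i' / y i' := hmax i
  have h2 : x j' / y j' ≤ x j / y j := hmin j
  have l1 : Real.log (x i) - Real.log (y i) ≤ Real.log (x i') - Real.log (y i') := by
    rw [← Real.log_div (ne_of_gt (hx i)) (ne_of_gt (hy i)),
      ← Real.log_div (ne_of_gt (hx i')) (ne_of_gt (hy i'))]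
    exact Real.log_le_log (div_pos (hx i) (hy i)) h1
  have l2 : Real.log (x j') - Real.log (y j') ≤ Real.log (x j) - Real.log (y j) := by
    rw [← Real.log_div (ne_of_gt (hx j)) (ne_of_gt (hy j)),
      ← Real.log_div (ne_of_gt (hx j')) (ne_of_gt (hy j'))]
    exact Real.log_le_log (div_pos (hx j') (hy j')) h2
  linarith

lemma hilbert_nonneg (hn : 0 < n) {x y : Fin n → ℝ} (hx : x ∈ posOrthant n)
    (hy : y ∈ posOrthant n) : 0 ≤ hilbertDistRn n x y := by
  have := hilbert_ge_pair hn hx hy ⟨0, hn⟩ ⟨0, hn⟩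
  simpa using this

end Basic

section Helpers
variable {n : ℕ}

lemma posOrthant_open : IsOpen (posOrthant n) := by
  have : posOrthant n = ⋂ i, (fun x : Fin n → ℝ => x i) ⁻¹' Set.Ioi 0 := by
    ext x; simp [posOrthant]
  rw [this]
  exact isOpen_iInter_of_finite fun i => (continuous_apply i).isOpen_preimage _ isOpen_Ioi

lemma vec_eq_sum_single (v : Fin n → ℝ) :
    v = ∑ k, v k • (Pi.single k (1 : ℝ) : Fin n → ℝ) := by
  funext j
  rw [Finset.sum_apply]
  have h : ∀ k, (v k • (Pi.single k (1:ℝ) : Fin n → ℝ)) j = if j = k then v k else 0 := by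
    intro k
    by_cases h : j = k <;> simp [Pi.single_apply, h]
  simp_rw [h]; simp

lemma clm_apply_eq_sum (D : (Fin n → ℝ) →L[ℝ] (Fin n → ℝ)) (v : Fin n → ℝ) (i : Fin n) :
    D v i = ∑ k, v k * D (Pi.single k 1) i := by
  conv_lhs => rw [vec_eq_sum_single v]
  rw [map_sum, Finset.sum_apply]
  congr 1; funext k
  rw [map_smul]; simp

variable {φ : (Fin n → ℝ) → Fin n → ℝ}

lemma hasFDerivAt_phi (hφ : ContDiffOn ℝ 1 φ (posOrthant n)) {x : Fin n → ℝ}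
    (hx : x ∈ posOrthant n) : HasFDerivAt φ (fderiv ℝ φ x) x := by
  have hdiff : DifferentiableAt ℝ φ x := by
    have := (hφ.differentiableOn one_ne_zero).differentiableAt
      (posOrthant_open.mem_nhds hx)
    exact this
  exact hdiff.hasFDerivAt

/-- Euler's relation for a positively 1-homogeneous map. -/
lemma euler_relation (hφ : ContDiffOn ℝ 1 φ (posOrthant n))
    (hhom : ∀ l : ℝ, 0 < l → ∀ x ∈ posOrthant n, φ (l • x) = l • φ x)
    {x : Fin n → ℝ} (hx : x ∈ posOrthant n) :
    fderiv ℝ φ x x = φ x := by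
  have hD : HasFDerivAt φ (fderiv ℝ φ x) x := hasFDerivAt_phi hφ hx
  -- curve l ↦ l • x at l = 1
  have hc : HasDerivAt (fun l : ℝ => l • x) x 1 := by
    simpa using (hasDerivAt_id (1:ℝ)).smul_const x
  have hcomp : HasDerivAt (fun l : ℝ => φ (l • x)) (fderiv ℝ φ x x) 1 := by
    have hD' : HasFDerivAt φ (fderiv ℝ φ x) ((1:ℝ) • x) := by simpa using hD
    exact hD'.comp_hasDerivAt (1:ℝ) hc
  have hg : HasDerivAt (fun l : ℝ => l • φ x) (φ x) 1 := by
    simpa using (hasDerivAt_id (1:ℝ)).smul_const (φ x)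
  have heq : (fun l : ℝ => φ (l • x)) =ᶠ[nhds (1:ℝ)] fun l : ℝ => l • φ x := by
    have hmem : Set.Ioi (0:ℝ) ∈ nhds (1:ℝ) := Ioi_mem_nhds one_pos
    filter_upwards [hmem] with l hl
    exact hhom l hl x hx
  have := (hcomp.congr_of_eventuallyEq heq.symm).unique hg
  rw [this]

lemma euler_component (hφ : ContDiffOn ℝ 1 φ (posOrthant n))
    (hhom : ∀ l : ℝ, 0 < l → ∀ x ∈ posOrthant n, φ (l • x) = l • φ x)
    {x : Fin n → ℝ} (hx : x ∈ posOrthant n) (i : Fin n) :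
    ∑ k, conjJacobian n φ x i k = φ x i / x i := by
  have h1 : φ x i = ∑ k, x k * fderiv ℝ φ x (Pi.single k 1) i := by
    conv_lhs => rw [← euler_relation hφ hhom hx]
    exact clm_apply_eq_sum _ x i
  have hxi := (hx i).ne'
  unfold conjJacobian
  rw [← Finset.sum_div, h1]
  congr 1
  exact Finset.sum_congr rfl fun k _ => by ring

end Helpers

section KeyLemma
variable {n : ℕ}

lemma sum_split_pair (i j : Fin n) (hij : i ≠ j) (f : Fin n → ℝ) :
    ∑ k, f k = f i + f j + ∑ k ∈ Finset.univ \ {i, j}, f k := by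
  rw [← Finset.sum_sdiff (Finset.subset_univ {i, j}), Finset.sum_pair hij]
  ring

/-- The key pointwise linear-algebra estimate. -/
lemma key_pointwise (A : Fin n → Fin n → ℝ) (i j : Fin n) (hij : i ≠ j)
    (w : Fin n → ℝ) (hmax : ∀ k, w k ≤ w i) (hmin : ∀ k, w j ≤ w k) :
    (∑ k, A i k * (w k - w i)) - (∑ k, A j k * (w k - w j)) ≤
      -(A j i + A i j + ∑ k ∈ Finset.univ \ {i, j}, min (A i k) (A j k)) * (w i - w j) := by
  rw [sum_split_pair i j hij (fun k => A i k * (w k - w i)),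
    sum_split_pair i j hij (fun k => A j k * (w k - w j))]
  have hterm : ∀ k ∈ Finset.univ \ ({i, j} : Finset (Fin n)),
      A i k * (w k - w i) - A j k * (w k - w j) ≤ -(min (A i k) (A j k) * (w i - w j)) := by
    intro k _
    rcases le_total (A j k) (A i k) with hba | hab
    · rw [min_eq_right hba]
      have h1 : A i k * (w k - w i) ≤ A j k * (w k - w i) :=
        mul_le_mul_of_nonpos_right hba (sub_nonpos.2 (hmax k))
      have e : A j k * (w k - w i) - A j k * (w k - w j) = -(A j k * (w i - w j)) := by ring
      linarith
    · rw [min_eq_left hab]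
      have h1 : A i k * (w k - w j) ≤ A j k * (w k - w j) :=
        mul_le_mul_of_nonneg_right hab (sub_nonneg.2 (hmin k))
      have e : A i k * (w k - w i) - A i k * (w k - w j) = -(A i k * (w i - w j)) := by ring
      linarith
  have hsum : ∑ k ∈ Finset.univ \ ({i, j} : Finset (Fin n)),
        (A i k * (w k - w i)) - ∑ k ∈ Finset.univ \ ({i, j} : Finset (Fin n)),
        (A j k * (w k - w j)) ≤
      -((∑ k ∈ Finset.univ \ ({i, j} : Finset (Fin n)), min (A i k) (A j k)) * (w i - w j)) := by
    rw [← Finset.sum_sub_distrib, Finset.sum_mul, ← Finset.sum_neg_distrib]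
    exact Finset.sum_le_sum hterm
  have e1 : A i i * (w i - w i) = 0 := by ring
  have e2 : A j j * (w j - w j) = 0 := by ring
  nlinarith [hsum]

lemma bracket_mem_finite (A : Fin n → Fin n → ℝ) :
    {r : ℝ | ∃ i j : Fin n, i ≠ j ∧
      r = A j i + A i j + ∑ k ∈ Finset.univ \ {i, j}, min (A i k) (A j k)}.Finite := by
  apply Set.Finite.subset (Set.finite_range (fun p : Fin n × Fin n =>
    A p.2 p.1 + A p.1 p.2 + ∑ k ∈ Finset.univ \ {p.1, p.2}, min (A p.1 k) (A p.2 k)))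
  rintro r ⟨i, j, hij, rfl⟩
  exact ⟨(i, j), rfl⟩

lemma neg_bracket_le_hMat (A : Fin n → Fin n → ℝ) (i j : Fin n) (hij : i ≠ j) :
    -(A j i + A i j + ∑ k ∈ Finset.univ \ {i, j}, min (A i k) (A j k)) ≤ hMat n A := by
  unfold hMat
  have h := csInf_le (bracket_mem_finite A).bddBelow ⟨i, j, hij, rfl⟩
  linarith

lemma hMat_le_of_forall (hn : 1 < n) (A : Fin n → Fin n → ℝ) (α : ℝ)
    (h : ∀ i j : Fin n, i ≠ j →
      -α ≤ A j i + A i j + ∑ k ∈ Finset.univ \ {i, j}, min (A i k) (A j k)) :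
    hMat n A ≤ α := by
  unfold hMat
  have hne : {r : ℝ | ∃ i j : Fin n, i ≠ j ∧
      r = A j i + A i j + ∑ k ∈ Finset.univ \ {i, j}, min (A i k) (A j k)}.Nonempty := by
    refine ⟨_, ⟨⟨0, by omega⟩, ⟨1, hn⟩, ?_, rfl⟩⟩
    intro hcon
    have := congrArg Fin.val hcon
    simp at this
  have := le_csInf hne (fun r hr => by obtain ⟨i, j, hij, rfl⟩ := hr; exact h i j hij)
  linarith

end KeyLemma

section Segment

variable {n : ℕ} {φ : (Fin n → ℝ) → Fin n → ℝ}

lemma ratio_mono {Yk Yi Xk Xi s : ℝ} (hYk : 0 < Yk) (hYi : 0 < Yi)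
    (hzk : 0 < Yk + s * (Xk - Yk)) (hzi : 0 < Yi + s * (Xi - Yi))
    (hr : Xk / Yk ≤ Xi / Yi) :
    (Xk - Yk) / (Yk + s * (Xk - Yk)) ≤ (Xi - Yi) / (Yi + s * (Xi - Yi)) := by
  rw [div_le_div_iff₀ hzk hzi]
  rw [div_le_div_iff₀ hYk hYi] at hr
  nlinarith [hr]

/-- The key spatial estimate along a segment joining `Y` to `X` inside `U`. -/
lemma segment_estimate
    (hφ : ContDiffOn ℝ 1 φ (posOrthant n))
    (hhom : ∀ l : ℝ, 0 < l → ∀ x ∈ posOrthant n, φ (l • x) = l • φ x)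
    {U : Set (Fin n → ℝ)} (hUconv : Convex ℝ U) (hUsub : U ⊆ posOrthant n)
    {α : ℝ} (hα : ∀ z ∈ U, hMat n (conjJacobian n φ z) ≤ α)
    {X Y : Fin n → ℝ} (hX : X ∈ U) (hY : Y ∈ U) (i j : Fin n)
    (hmaxr : ∀ k, X k / Y k ≤ X i / Y i) (hminr : ∀ k, X j / Y j ≤ X k / Y k) :
    (φ X i / X i - φ X j / X j) - (φ Y i / Y i - φ Y j / Y j) ≤
      α * ((Real.log (X i) - Real.log (Y i)) - (Real.log (X j) - Real.log (Y j))) := by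
  by_cases hij : i = j
  · subst hij; simp
  have hXpos := hUsub hX
  have hYpos := hUsub hY
  set v : Fin n → ℝ := fun k => X k - Y k with hv
  set z : ℝ → Fin n → ℝ := fun s k => Y k + s * v k with hz
  have hzmem : ∀ s ∈ Set.Icc (0:ℝ) 1, z s ∈ U := by
    intro s hs
    have hzs : z s = (1 - s) • Y + s • X := by
      funext k
      simp only [hz, hv, Pi.add_apply, Pi.smul_apply, smul_eq_mul]
      ring
    rw [hzs]
    exact hUconv hY hX (by linarith [hs.2]) hs.1 (by ring)
  have hzpos : ∀ s ∈ Set.Icc (0:ℝ) 1, ∀ k, 0 < z s k := fun s hs k => hUsub (hzmem s hs) k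
  have hzder : ∀ s : ℝ, HasDerivAt (fun t => z t) v s := by
    intro s
    rw [hasDerivAt_pi]
    intro k
    have h1 : HasDerivAt (fun t : ℝ => Y k + t * v k) (v k) s := by
      simpa using ((hasDerivAt_id s).mul_const (v k)).const_add (Y k)
    simpa [hz] using h1
  set Φ : ℝ → ℝ := fun s =>
    (φ (z s) i / z s i - φ (z s) j / z s j)
      - α * (Real.log (z s i) - Real.log (z s j)) with hΦdef
  have main : ∀ s ∈ Set.Icc (0:ℝ) 1,
      HasDerivAt Φ
        (((∑ k, conjJacobian n φ (z s) i k * (v k / z s k - v i / z s i))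
          - ∑ k, conjJacobian n φ (z s) j k * (v k / z s k - v j / z s j))
          - α * (v i / z s i - v j / z s j)) s := by
    intro s hs
    have hzs : z s ∈ posOrthant n := hUsub (hzmem s hs)
    have hφz : HasFDerivAt φ (fderiv ℝ φ (z s)) (z s) := hasFDerivAt_phi hφ hzs
    have hcomp : HasDerivAt (fun t => φ (z t)) (fderiv ℝ φ (z s) v) s :=
      hφz.comp_hasDerivAt s (hzder s)
    have hφm : ∀ m, HasDerivAt (fun t => φ (z t) m) (fderiv ℝ φ (z s) v m) s :=
      fun m => hasDerivAt_pi.1 hcomp m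
    have hzm : ∀ m, HasDerivAt (fun t => z t m) (v m) s :=
      fun m => hasDerivAt_pi.1 (hzder s) m
    have hquot : ∀ m, HasDerivAt (fun t => φ (z t) m / z t m)
        ((fderiv ℝ φ (z s) v m * z s m - φ (z s) m * v m) / (z s m) ^ 2) s :=
      fun m => (hφm m).div (hzm m) (hzpos s hs m).ne'
    have hlog : ∀ m, HasDerivAt (fun t => Real.log (z t m)) (v m / z s m) s :=
      fun m => (hzm m).log (hzpos s hs m).ne'
    have hD : HasDerivAt Φ
        ((((fderiv ℝ φ (z s) v i * z s i - φ (z s) i * v i) / (z s i) ^ 2)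
          - ((fderiv ℝ φ (z s) v j * z s j - φ (z s) j * v j) / (z s j) ^ 2))
          - α * (v i / z s i - v j / z s j)) s :=
      ((hquot i).sub (hquot j)).sub (((hlog i).sub (hlog j)).const_mul α)
    have hE : ∀ m, ∑ k, conjJacobian n φ (z s) m k * (v k / z s k - v m / z s m)
        = (fderiv ℝ φ (z s) v m * z s m - φ (z s) m * v m) / (z s m) ^ 2 := by
      intro m
      have h1 : ∑ k, conjJacobian n φ (z s) m k * (v k / z s k - v m / z s m)
          = (∑ k, conjJacobian n φ (z s) m k * (v k / z s k))
            - (∑ k, conjJacobian n φ (z s) m k) * (v m / z s m) := by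
        simp_rw [mul_sub]
        rw [Finset.sum_sub_distrib, Finset.sum_mul]
      have h2 : ∀ k, conjJacobian n φ (z s) m k * (v k / z s k)
          = v k * fderiv ℝ φ (z s) (Pi.single k 1) m / z s m := by
        intro k
        unfold conjJacobian
        have hk := (hzpos s hs k).ne'
        have hm := (hzpos s hs m).ne'
        field_simp
      have h3 : ∑ k, conjJacobian n φ (z s) m k * (v k / z s k)
          = fderiv ℝ φ (z s) v m / z s m := by
        simp_rw [h2]
        rw [← Finset.sum_div, ← clm_apply_eq_sum]
      have h4 : (∑ k, conjJacobian n φ (z s) m k) = φ (z s) m / z s m :=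
        euler_component hφ hhom hzs m
      rw [h1, h3, h4]
      have hm := (hzpos s hs m).ne'
      field_simp
    rw [hE i, hE j] at *
    exact hD
  have hΦ'le : ∀ s ∈ Set.Icc (0:ℝ) 1,
      (((∑ k, conjJacobian n φ (z s) i k * (v k / z s k - v i / z s i))
        - ∑ k, conjJacobian n φ (z s) j k * (v k / z s k - v j / z s j))
        - α * (v i / z s i - v j / z s j)) ≤ 0 := by
    intro s hs
    set A := conjJacobian n φ (z s) with hA
    set w : Fin n → ℝ := fun k => v k / z s k with hw
    have hwmax : ∀ k, w k ≤ w i := by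
      intro k
      have := ratio_mono (hYpos k) (hYpos i) (hzpos s hs k) (hzpos s hs i) (hmaxr k)
      simpa [hw, hz, hv] using this
    have hwmin : ∀ k, w j ≤ w k := by
      intro k
      have := ratio_mono (hYpos j) (hYpos k) (hzpos s hs j) (hzpos s hs k) (hminr k)
      simpa [hw, hz, hv] using this
    have hkey := key_pointwise A i j hij w hwmax hwmin
    have h1 := neg_bracket_le_hMat A i j hij
    have h2 := hα (z s) (hzmem s hs)
    have hwij : 0 ≤ w i - w j := sub_nonneg.2 (hwmin i)
    have h3 : -(A j i + A i j + ∑ k ∈ Finset.univ \ {i, j}, min (A i k) (A j k)) * (w i - w j)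
        ≤ α * (w i - w j) :=
      mul_le_mul_of_nonneg_right (h1.trans h2) hwij
    have h4 : (∑ k, A i k * (w k - w i)) - (∑ k, A j k * (w k - w j)) ≤ α * (w i - w j) :=
      hkey.trans h3
    have hwk : ∀ k, w k = v k / z s k := fun k => rfl
    simp only [hw] at h4
    linarith [h4]
  have hcont : ContinuousOn Φ (Set.Icc (0:ℝ) 1) :=
    fun s hs => (main s hs).continuousAt.continuousWithinAt
  have hdiff : DifferentiableOn ℝ Φ (interior (Set.Icc (0:ℝ) 1)) := by
    rw [interior_Icc]
    exact fun s hs => ((main s (Set.Ioo_subset_Icc_self hs)).differentiableAt).differentiableWithinAt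
  have hderiv0 : ∀ s ∈ interior (Set.Icc (0:ℝ) 1), deriv Φ s ≤ 0 := by
    rw [interior_Icc]
    intro s hs
    rw [(main s (Set.Ioo_subset_Icc_self hs)).deriv]
    exact hΦ'le s (Set.Ioo_subset_Icc_self hs)
  have hanti := antitoneOn_of_deriv_nonpos (convex_Icc (0:ℝ) 1) hcont hdiff hderiv0
  have hΦ10 : Φ 1 ≤ Φ 0 :=
    hanti (Set.left_mem_Icc.2 zero_le_one) (Set.right_mem_Icc.2 zero_le_one) zero_le_one
  have hz1 : z 1 = X := by funext k; simp [hz, hv]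
  have hz0 : z 0 = Y := by funext k; simp [hz, hv]
  have e1 : Φ 1 = (φ X i / X i - φ X j / X j)
      - α * (Real.log (X i) - Real.log (X j)) := by
    simp only [hΦdef, hz1]
  have e0 : Φ 0 = (φ Y i / Y i - φ Y j / Y j)
      - α * (Real.log (Y i) - Real.log (Y j)) := by
    simp only [hΦdef, hz0]
  rw [e1, e0] at hΦ10
  linarith [hΦ10]

end Segment

section Sufficiency

open Filter

variable {n : ℕ} {φ : (Fin n → ℝ) → Fin n → ℝ}

lemma ratio_iff_logdiff {a b c d : ℝ} (ha : 0 < a) (hb : 0 < b) (hc : 0 < c) (hd : 0 < d) :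
    a / b ≤ c / d ↔ (Real.log a - Real.log b) ≤ (Real.log c - Real.log d) := by
  rw [← Real.log_div ha.ne' hb.ne', ← Real.log_div hc.ne' hd.ne',
    Real.log_le_log_iff (div_pos ha hb) (div_pos hc hd)]

lemma sufficiency_estimate
    (hn : 1 < n)
    (hφ : ContDiffOn ℝ 1 φ (posOrthant n))
    (hhom : ∀ l : ℝ, 0 < l → ∀ x ∈ posOrthant n, φ (l • x) = l • φ x)
    {U : Set (Fin n → ℝ)} (hUconv : Convex ℝ U) (hUsub : U ⊆ posOrthant n)
    {M : ℝ → (Fin n → ℝ) → Fin n → ℝ} {τ : (Fin n → ℝ) → ℝ≥0∞}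
    (hM0 : ∀ x ∈ U, M 0 x = x)
    (hMder : ∀ x ∈ U, ∀ t : ℝ, 0 ≤ t → ENNReal.ofReal t < τ x →
        HasDerivAt (fun s : ℝ => M s x) (φ (M t x)) t)
    (hMmem : ∀ x ∈ U, ∀ t : ℝ, 0 ≤ t → ENNReal.ofReal t < τ x → M t x ∈ U)
    {α : ℝ} (hα : ∀ z ∈ U, hMat n (conjJacobian n φ z) ≤ α)
    {x : Fin n → ℝ} (hx : x ∈ U) {y : Fin n → ℝ} (hy : y ∈ U)
    {t : ℝ} (ht0 : 0 ≤ t) (htτ : ENNReal.ofReal t < min (τ x) (τ y)) :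
    hilbertDistRn n (M t x) (M t y) ≤ Real.exp (α * t) * hilbertDistRn n x y := by
  have hn0 : 0 < n := by omega
  have hsx : ∀ s : ℝ, 0 ≤ s → s ≤ t → ENNReal.ofReal s < τ x := fun s _ h1 =>
    lt_of_le_of_lt (ENNReal.ofReal_le_ofReal h1) (lt_of_lt_of_le htτ (min_le_left _ _))
  have hsy : ∀ s : ℝ, 0 ≤ s → s ≤ t → ENNReal.ofReal s < τ y := fun s _ h1 =>
    lt_of_le_of_lt (ENNReal.ofReal_le_ofReal h1) (lt_of_lt_of_le htτ (min_le_right _ _))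
  have hXmem : ∀ s ∈ Set.Icc (0:ℝ) t, M s x ∈ U := fun s hs =>
    hMmem x hx s hs.1 (hsx s hs.1 hs.2)
  have hYmem : ∀ s ∈ Set.Icc (0:ℝ) t, M s y ∈ U := fun s hs =>
    hMmem y hy s hs.1 (hsy s hs.1 hs.2)
  have hXpos : ∀ s ∈ Set.Icc (0:ℝ) t, ∀ k, 0 < M s x k := fun s hs => hUsub (hXmem s hs)
  have hYpos : ∀ s ∈ Set.Icc (0:ℝ) t, ∀ k, 0 < M s y k := fun s hs => hUsub (hYmem s hs)
  set g : Fin n × Fin n → ℝ → ℝ := fun p s =>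
    (Real.log (M s x p.1) - Real.log (M s y p.1))
      - (Real.log (M s x p.2) - Real.log (M s y p.2)) with hgdef
  set F : ℝ → ℝ := fun s => hilbertDistRn n (M s x) (M s y) with hFdef
  have hgder : ∀ p : Fin n × Fin n, ∀ s ∈ Set.Icc (0:ℝ) t,
      HasDerivAt (g p)
        ((φ (M s x) p.1 / M s x p.1 - φ (M s x) p.2 / M s x p.2)
          - (φ (M s y) p.1 / M s y p.1 - φ (M s y) p.2 / M s y p.2)) s := by
    intro p s hs
    have hdx : HasDerivAt (fun r : ℝ => M r x) (φ (M s x)) s :=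
      hMder x hx s hs.1 (hsx s hs.1 hs.2)
    have hdy : HasDerivAt (fun r : ℝ => M r y) (φ (M s y)) s :=
      hMder y hy s hs.1 (hsy s hs.1 hs.2)
    have hlx : ∀ k, HasDerivAt (fun r : ℝ => Real.log (M r x k)) (φ (M s x) k / M s x k) s :=
      fun k => (hasDerivAt_pi.1 hdx k).log (hXpos s hs k).ne'
    have hly : ∀ k, HasDerivAt (fun r : ℝ => Real.log (M r y k)) (φ (M s y) k / M s y k) s :=
      fun k => (hasDerivAt_pi.1 hdy k).log (hYpos s hs k).ne'
    have hD := ((hlx p.1).sub (hly p.1)).sub ((hlx p.2).sub (hly p.2))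
    have heq : (φ (M s x) p.1 / M s x p.1 - φ (M s x) p.2 / M s x p.2)
          - (φ (M s y) p.1 / M s y p.1 - φ (M s y) p.2 / M s y p.2)
        = (φ (M s x) p.1 / M s x p.1 - φ (M s y) p.1 / M s y p.1)
          - (φ (M s x) p.2 / M s x p.2 - φ (M s y) p.2 / M s y p.2) := by ring
    rw [heq]
    exact hD
  have hgle : ∀ p : Fin n × Fin n, ∀ s ∈ Set.Icc (0:ℝ) t, g p s ≤ F s := by
    intro p s hs
    exact hilbert_ge_pair hn0 (hUsub (hXmem s hs)) (hUsub (hYmem s hs)) p.1 p.2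
  have hatt : ∀ s ∈ Set.Icc (0:ℝ) t, ∃ p : Fin n × Fin n, F s = g p s ∧
      (∀ k, M s x k / M s y k ≤ M s x p.1 / M s y p.1) ∧
      (∀ k, M s x p.2 / M s y p.2 ≤ M s x k / M s y k) := by
    intro s hs
    obtain ⟨i, j, h1, h2, h3⟩ := hilbert_bounds hn0 (hUsub (hXmem s hs)) (hUsub (hYmem s hs))
    exact ⟨(i, j), h3, h1, h2⟩
  have htie : ∀ s ∈ Set.Icc (0:ℝ) t, ∀ q : Fin n × Fin n, g q s = F s →
      (∀ k, M s x k / M s y k ≤ M s x q.1 / M s y q.1) ∧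
      (∀ k, M s x q.2 / M s y q.2 ≤ M s x k / M s y k) := by
    intro s hs q hq
    obtain ⟨p, hFp, hp1, hp2⟩ := hatt s hs
    have hq1 : (Real.log (M s x q.1) - Real.log (M s y q.1)) ≤
        (Real.log (M s x p.1) - Real.log (M s y p.1)) :=
      (ratio_iff_logdiff (hXpos s hs q.1) (hYpos s hs q.1)
        (hXpos s hs p.1) (hYpos s hs p.1)).1 (hp1 q.1)
    have hq2 : (Real.log (M s x p.2) - Real.log (M s y p.2)) ≤
        (Real.log (M s x q.2) - Real.log (M s y q.2)) :=
      (ratio_iff_logdiff (hXpos s hs p.2) (hYpos s hs p.2)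
        (hXpos s hs q.2) (hYpos s hs q.2)).1 (hp2 q.2)
    have hgq : g q s = g p s := by rw [hq, hFp]
    have he1 : (Real.log (M s x q.1) - Real.log (M s y q.1)) =
        (Real.log (M s x p.1) - Real.log (M s y p.1)) := by
      simp only [hgdef] at hgq; linarith
    have he2 : (Real.log (M s x q.2) - Real.log (M s y q.2)) =
        (Real.log (M s x p.2) - Real.log (M s y p.2)) := by
      simp only [hgdef] at hgq; linarith
    constructor
    · intro k
      refine le_trans (hp1 k) ?_
      exact (ratio_iff_logdiff (hXpos s hs p.1) (hYpos s hs p.1)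
        (hXpos s hs q.1) (hYpos s hs q.1)).2 (le_of_eq he1.symm)
    · intro k
      refine le_trans ?_ (hp2 k)
      exact (ratio_iff_logdiff (hXpos s hs q.2) (hYpos s hs q.2)
        (hXpos s hs p.2) (hYpos s hs p.2)).2 (le_of_eq he2)
  have hbound : ∀ s ∈ Set.Icc (0:ℝ) t, ∀ q : Fin n × Fin n, g q s = F s →
      ((φ (M s x) q.1 / M s x q.1 - φ (M s x) q.2 / M s x q.2)
        - (φ (M s y) q.1 / M s y q.1 - φ (M s y) q.2 / M s y q.2)) ≤ α * F s := by
    intro s hs q hq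
    obtain ⟨hq1, hq2⟩ := htie s hs q hq
    have := segment_estimate hφ hhom hUconv hUsub hα (hXmem s hs) (hYmem s hs) q.1 q.2 hq1 hq2
    calc ((φ (M s x) q.1 / M s x q.1 - φ (M s x) q.2 / M s x q.2)
        - (φ (M s y) q.1 / M s y q.1 - φ (M s y) q.2 / M s y q.2))
        ≤ α * ((Real.log (M s x q.1) - Real.log (M s y q.1))
          - (Real.log (M s x q.2) - Real.log (M s y q.2))) := this
      _ = α * g q s := by simp only [hgdef]
      _ = α * F s := by rw [hq]
  have hp0 : ((⟨0, hn0⟩, ⟨0, hn0⟩) : Fin n × Fin n) ∈ (Finset.univ : Finset (Fin n × Fin n)) :=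
    Finset.mem_univ _
  have hne : (Finset.univ : Finset (Fin n × Fin n)).Nonempty := ⟨_, hp0⟩
  have hFrep : ∀ s ∈ Set.Icc (0:ℝ) t, F s = Finset.univ.sup' hne (fun p => g p s) := by
    intro s hs
    apply le_antisymm
    · obtain ⟨p, hFp, _, _⟩ := hatt s hs
      rw [hFp]
      exact Finset.le_sup' (fun p => g p s) (Finset.mem_univ p)
    · exact Finset.sup'_le _ _ fun p _ => hgle p s hs
  have hFcont : ContinuousOn F (Set.Icc (0:ℝ) t) := by
    have hsup : ContinuousOn (fun s => Finset.univ.sup' hne (fun p => g p s))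
        (Set.Icc (0:ℝ) t) := by
      exact ContinuousOn.finset_sup'_apply (L := ℝ) (f := g) hne
        (fun p _ => fun s hs => (hgder p s hs).continuousAt.continuousWithinAt)
    exact ContinuousOn.congr hsup hFrep
  have hslope : ∀ s ∈ Set.Ico (0:ℝ) t, ∀ r, α * F s < r →
      ∃ᶠ z in nhdsWithin s (Set.Ioi s), (z - s)⁻¹ * (F z - F s) < r := by
    intro s hs r hr
    have hst : s < t := hs.2
    have hsI : s ∈ Set.Icc (0:ℝ) t := ⟨hs.1, le_of_lt hst⟩
    have hev : ∀ q : Fin n × Fin n,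
        ∀ᶠ z in nhdsWithin s (Set.Ioi s), (z - s)⁻¹ * (g q z - F s) < r := by
      intro q
      rcases (hgle q s hsI).lt_or_eq with hlt | heq
      · -- strict: slope tends to -∞
        have hcont : Tendsto (g q) (nhdsWithin s (Set.Ioi s)) (nhds (g q s)) :=
          ((hgder q s hsI).continuousAt.tendsto).mono_left nhdsWithin_le_nhds
        have hnum : Tendsto (fun z => g q z - F s) (nhdsWithin s (Set.Ioi s))
            (nhds (g q s - F s)) := hcont.sub_const (F s)
        have hden : Tendsto (fun z => (z - s)⁻¹) (nhdsWithin s (Set.Ioi s)) Filter.atTop := by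
          apply tendsto_inv_nhdsGT_zero.comp
          apply tendsto_nhdsWithin_of_tendsto_nhds_of_eventually_within
          · have : Tendsto (fun z : ℝ => z - s) (nhds s) (nhds (s - s)) :=
              (continuous_id.sub continuous_const).tendsto s
            rw [sub_self] at this
            exact this.mono_left nhdsWithin_le_nhds
          · exact eventually_nhdsWithin_of_forall (fun z hz => Set.mem_Ioi.2 (sub_pos.2 hz))
        have hlim : Tendsto (fun z => (g q z - F s) * (z - s)⁻¹)
            (nhdsWithin s (Set.Ioi s)) Filter.atBot :=
          Filter.Tendsto.neg_mul_atTop (sub_neg.2 hlt) hnum hden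
        filter_upwards [hlim.eventually (Filter.eventually_lt_atBot r)] with z hz
        simpa [mul_comm] using hz
      · -- tie: slope tends to the derivative which is < r
        have hd := hgder q s hsI
        have hslope := hasDerivAt_iff_tendsto_slope.1 hd
        have hlt : ((φ (M s x) q.1 / M s x q.1 - φ (M s x) q.2 / M s x q.2)
            - (φ (M s y) q.1 / M s y q.1 - φ (M s y) q.2 / M s y q.2)) < r :=
          lt_of_le_of_lt (hbound s hsI q heq) hr
        have hev' := (hslope.eventually_lt_const hlt).filter_mono
          (nhdsWithin_mono s (fun z (hz : s < z) => Set.mem_compl_singleton_iff.2 hz.ne'))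
        filter_upwards [hev'] with z hz
        rw [slope_def_field] at hz
        rw [← heq]
        calc (z - s)⁻¹ * (g q z - g q s) = (g q z - g q s) / (z - s) := by
              rw [div_eq_inv_mul]
          _ < r := hz
    have hIoc : Set.Ioc s t ∈ nhdsWithin s (Set.Ioi s) := Ioc_mem_nhdsGT hst
    have hall : ∀ᶠ z in nhdsWithin s (Set.Ioi s),
        ∀ q : Fin n × Fin n, (z - s)⁻¹ * (g q z - F s) < r := Filter.eventually_all.2 hev
    apply Filter.Eventually.frequently
    filter_upwards [hall, hIoc] with z hz hzIoc
    have hzI : z ∈ Set.Icc (0:ℝ) t := ⟨le_trans hs.1 (le_of_lt hzIoc.1), hzIoc.2⟩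
    obtain ⟨q, _, hq⟩ := Finset.exists_mem_eq_sup' hne (fun p => g p z)
    rw [hFrep z hzI, hq]
    exact hz q
  have hgron := le_gronwallBound_of_liminf_deriv_right_le (f := F)
    (f' := fun s => α * F s) (δ := F 0) (K := α) (ε := 0) (a := 0) (b := t)
    hFcont hslope (le_refl _) (fun s _ => by rw [add_zero])
  have hFt := hgron t ⟨ht0, le_refl t⟩
  rw [sub_zero, gronwallBound_ε0] at hFt
  have hF0 : F 0 = hilbertDistRn n x y := by
    simp only [hFdef, hM0 x hx, hM0 y hy]
  rw [hF0] at hFt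
  calc hilbertDistRn n (M t x) (M t y) = F t := rfl
    _ ≤ hilbertDistRn n x y * Real.exp (α * t) := hFt
    _ = Real.exp (α * t) * hilbertDistRn n x y := mul_comm _ _
end Sufficiency

section TauPosNecessity

open Filter

variable {n : ℕ} {φ : (Fin n → ℝ) → Fin n → ℝ}

lemma exists_pos_ofReal_lt {m : ℝ≥0∞} (hm : 0 < m) :
    ∃ δ : ℝ, 0 < δ ∧ ENNReal.ofReal δ < m := by
  rcases eq_or_ne m ⊤ with h | h
  · exact ⟨1, one_pos, by simp [h]⟩
  · refine ⟨m.toReal / 2, half_pos (ENNReal.toReal_pos hm.ne' h), ?_⟩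
    rw [ENNReal.ofReal_lt_iff_lt_toReal (by positivity) h]
    have : 0 < m.toReal := ENNReal.toReal_pos hm.ne' h
    linarith

/-- Comparison of derivatives from a one-sided comparison of functions. -/
lemma right_deriv_le {f g : ℝ → ℝ} {f' g' : ℝ}
    (hf : HasDerivAt f f' 0) (hg : HasDerivAt g g' 0) (h0 : f 0 = g 0)
    {δ : ℝ} (hδ : 0 < δ) (hle : ∀ s, 0 < s → s < δ → f s ≤ g s) : f' ≤ g' := by
  have hmono : nhdsWithin (0:ℝ) (Set.Ioi 0) ≤ nhdsWithin (0:ℝ) {(0:ℝ)}ᶜ :=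
    nhdsWithin_mono 0 (fun z (hz : (0:ℝ) < z) => Set.mem_compl_singleton_iff.2 hz.ne')
  have h1 : Tendsto (slope f 0) (nhdsWithin 0 (Set.Ioi 0)) (nhds f') :=
    (hasDerivAt_iff_tendsto_slope.1 hf).mono_left hmono
  have h2 : Tendsto (slope g 0) (nhdsWithin 0 (Set.Ioi 0)) (nhds g') :=
    (hasDerivAt_iff_tendsto_slope.1 hg).mono_left hmono
  refine le_of_tendsto_of_tendsto h1 h2 ?_
  filter_upwards [Ioo_mem_nhdsGT hδ] with z hz
  rw [slope_def_field, slope_def_field, sub_zero]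
  rw [div_le_div_iff_of_pos_right hz.1, h0]
  exact sub_le_sub_right (hle z hz.1 hz.2) _

lemma tau_pos
    (hφ : ContDiffOn ℝ 1 φ (posOrthant n))
    {U : Set (Fin n → ℝ)} (hUopen : IsOpen U) (hUsub : U ⊆ posOrthant n)
    {τ : (Fin n → ℝ) → ℝ≥0∞}
    (hτmax : ∀ x ∈ U, ∀ (γ : ℝ → Fin n → ℝ) (s : ℝ≥0∞), γ 0 = x →
        (∀ t : ℝ, 0 ≤ t → ENNReal.ofReal t < s → HasDerivAt γ (φ (γ t)) t ∧ γ t ∈ U) →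
        s ≤ τ x)
    {x : Fin n → ℝ} (hx : x ∈ U) : 0 < τ x := by
  have hca : ContDiffAt ℝ 1 φ x := hφ.contDiffAt (posOrthant_open.mem_nhds (hUsub hx))
  obtain ⟨f, hf0, ε, hε, hfd⟩ := hca.exists_forall_mem_closedBall_exists_eq_forall_mem_Ioo_hasDerivAt₀ 0
  have h0mem : (0:ℝ) ∈ Set.Ioo (0 - ε) (0 + ε) := by constructor <;> simp <;> linarith
  have hfc : ContinuousAt f 0 := (hfd 0 h0mem).continuousAt
  have hU0 : U ∈ nhds (f 0) := hUopen.mem_nhds (by rw [hf0]; exact hx)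
  obtain ⟨δ, hδpos, hδ⟩ := Metric.mem_nhds_iff.1 (hfc hU0)
  set δ' := min (δ / 2) (ε / 2) with hδ'
  have hδ'pos : 0 < δ' := lt_min (by linarith) (by linarith)
  have hkey := hτmax x hx f (ENNReal.ofReal δ') hf0 ?_
  · exact lt_of_lt_of_le (ENNReal.ofReal_pos.2 hδ'pos) hkey
  · intro t ht0 htδ
    have ht' : t < δ' := by
      rwa [ENNReal.ofReal_lt_ofReal_iff hδ'pos] at htδ
    have h1 : t < ε := lt_of_lt_of_le ht' (le_trans (min_le_right _ _) (by linarith))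
    have h2 : t < δ := lt_of_lt_of_le ht' (le_trans (min_le_left _ _) (by linarith))
    constructor
    · exact hfd t ⟨by linarith, by linarith⟩
    · apply hδ
      rw [Metric.mem_ball, Real.dist_eq, sub_zero, abs_of_nonneg ht0]
      exact h2

end TauPosNecessity

section Necessity

open Filter

variable {n : ℕ} {φ : (Fin n → ℝ) → Fin n → ℝ}

lemma necessity
    (hn : 1 < n)
    (hφ : ContDiffOn ℝ 1 φ (posOrthant n))
    (hhom : ∀ l : ℝ, 0 < l → ∀ x ∈ posOrthant n, φ (l • x) = l • φ x)
    {U : Set (Fin n → ℝ)} (hUopen : IsOpen U) (hUsub : U ⊆ posOrthant n)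
    {M : ℝ → (Fin n → ℝ) → Fin n → ℝ} {τ : (Fin n → ℝ) → ℝ≥0∞}
    (hM0 : ∀ x ∈ U, M 0 x = x)
    (hMder : ∀ x ∈ U, ∀ t : ℝ, 0 ≤ t → ENNReal.ofReal t < τ x →
        HasDerivAt (fun s : ℝ => M s x) (φ (M t x)) t)
    (hMmem : ∀ x ∈ U, ∀ t : ℝ, 0 ≤ t → ENNReal.ofReal t < τ x → M t x ∈ U)
    (hτmax : ∀ x ∈ U, ∀ (γ : ℝ → Fin n → ℝ) (s : ℝ≥0∞), γ 0 = x →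
        (∀ t : ℝ, 0 ≤ t → ENNReal.ofReal t < s → HasDerivAt γ (φ (γ t)) t ∧ γ t ∈ U) →
        s ≤ τ x)
    {α : ℝ}
    (hαL : ∀ x ∈ U, ∀ y ∈ U, ∀ t : ℝ, 0 ≤ t → ENNReal.ofReal t < min (τ x) (τ y) →
        hilbertDistRn n (M t x) (M t y) ≤ Real.exp (α * t) * hilbertDistRn n x y)
    {x : Fin n → ℝ} (hx : x ∈ U) :
    hMat n (conjJacobian n φ x) ≤ α := by
  have hn0 : 0 < n := by omega
  have hxpos : ∀ k, 0 < x k := hUsub hx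
  apply hMat_le_of_forall hn
  intro i j hij
  set A : Fin n → Fin n → ℝ := conjJacobian n φ x with hA
  set c : Fin n → ℝ := fun k => if k = i then 1 else if k = j then 0 else
      (if A j k ≤ A i k then 1 else 0) with hc
  have hci : c i = 1 := by rw [hc]; dsimp only; rw [if_pos rfl]
  have hcj : c j = 0 := by rw [hc]; dsimp only; rw [if_neg (Ne.symm hij), if_pos rfl]
  have hc0 : ∀ k, 0 ≤ c k := by intro k; rw [hc]; dsimp only; split_ifs <;> norm_num
  have hc1 : ∀ k, c k ≤ 1 := by intro k; rw [hc]; dsimp only; split_ifs <;> norm_num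
  set Y : ℝ → Fin n → ℝ := fun ε k => x k * Real.exp (ε * c k) with hYdef
  have hY0 : Y 0 = x := by funext k; rw [hYdef]; simp
  have hYcont : Continuous Y := by
    apply continuous_pi
    intro k
    rw [hYdef]
    exact continuous_const.mul (Real.continuous_exp.comp (continuous_id.mul continuous_const))
  obtain ⟨ε₀, hε₀pos, hε₀⟩ : ∃ ε₀ > 0, ∀ ε : ℝ, |ε| < ε₀ → Y ε ∈ U := by
    have hmem : Y ⁻¹' U ∈ nhds (0:ℝ) :=
      hYcont.continuousAt.preimage_mem_nhds (hUopen.mem_nhds (by rw [hY0]; exact hx))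
    obtain ⟨ε₀, hp, hb⟩ := Metric.mem_nhds_iff.1 hmem
    exact ⟨ε₀, hp, fun ε hε => hb (by rwa [Metric.mem_ball, Real.dist_eq, sub_zero])⟩
  have hτx := tau_pos hφ hUopen hUsub hτmax hx
  set v : Fin n → ℝ := fun k => x k * c k with hv
  have hYder : HasDerivAt Y v 0 := by
    rw [hasDerivAt_pi]
    intro k
    have h1 : HasDerivAt (fun ε : ℝ => ε * c k) (c k) 0 := by
      simpa using (hasDerivAt_id (0:ℝ)).mul_const (c k)
    have h2 : HasDerivAt (fun ε : ℝ => Real.exp (ε * c k)) (c k) 0 := by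
      simpa using h1.exp
    have h3 : HasDerivAt (fun ε : ℝ => x k * Real.exp (ε * c k)) (x k * c k) 0 := by
      simpa using h2.const_mul (x k)
    rw [hYdef, hv]
    exact h3
  have hDer : HasDerivAt (fun ε => φ (Y ε)) (fderiv ℝ φ x v) 0 := by
    have hF : HasFDerivAt φ (fderiv ℝ φ x) (Y 0) := by
      rw [hY0]; exact hasFDerivAt_phi hφ (hUsub hx)
    exact hF.comp_hasDerivAt 0 hYder
  have hquot : ∀ m, HasDerivAt (fun ε => φ (Y ε) m / Y ε m)
      ((fderiv ℝ φ x v m * x m - φ x m * v m) / x m ^ 2) 0 := by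
    intro m
    have h1 : HasDerivAt (fun ε => φ (Y ε) m) (fderiv ℝ φ x v m) 0 := hasDerivAt_pi.1 hDer m
    have h2 : HasDerivAt (fun ε => Y ε m) (v m) 0 := hasDerivAt_pi.1 hYder m
    have hne : Y 0 m ≠ 0 := by rw [hY0]; exact (hxpos m).ne'
    have h3 := h1.div h2 hne
    rw [hY0] at h3
    exact h3
  set ψ : ℝ → ℝ := fun ε => (φ x j / x j - φ (Y ε) j / Y ε j)
      - (φ x i / x i - φ (Y ε) i / Y ε i) with hψ
  have hψ0 : ψ 0 = 0 := by rw [hψ]; dsimp only; rw [hY0]; ring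
  set B : ℝ := A j i + A i j + ∑ k ∈ Finset.univ \ {i, j}, min (A i k) (A j k) with hB
  have hψder : HasDerivAt ψ (-B) 0 := by
    have h4 : HasDerivAt ψ
        ((0 - (fderiv ℝ φ x v j * x j - φ x j * v j) / x j ^ 2)
          - (0 - (fderiv ℝ φ x v i * x i - φ x i * v i) / x i ^ 2)) 0 := by
      rw [hψ]
      exact ((hasDerivAt_const (0:ℝ) (φ x j / x j)).sub (hquot j)).sub
        (((hasDerivAt_const (0:ℝ) (φ x i / x i))).sub (hquot i))
    have hqm : ∀ m, (fderiv ℝ φ x v m * x m - φ x m * v m) / x m ^ 2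
        = (∑ k, A m k * c k) - (φ x m / x m) * c m := by
      intro m
      have hxm : x m ≠ 0 := (hxpos m).ne'
      have h5 : fderiv ℝ φ x v m = ∑ k, v k * fderiv ℝ φ x (Pi.single k 1) m :=
        clm_apply_eq_sum _ v m
      have h6 : ∑ k, A m k * c k = (∑ k, v k * fderiv ℝ φ x (Pi.single k 1) m) / x m := by
        rw [Finset.sum_div]
        apply Finset.sum_congr rfl
        intro k _
        rw [hA]
        unfold conjJacobian
        rw [hv]
        dsimp only
        field_simp
      rw [h5, h6, hv]
      dsimp only
      field_simp
    have heuli : φ x i / x i = ∑ k, A i k := by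
      rw [hA]; exact (euler_component hφ hhom (hUsub hx) i).symm
    have hident : (∑ k, A i k * c k) - (∑ k, A j k * c k) - (∑ k, A i k) = -B := by
      rw [← Finset.sum_sub_distrib, ← Finset.sum_sub_distrib,
        sum_split_pair i j hij (fun k => A i k * c k - A j k * c k - A i k)]
      have hti : A i i * c i - A j i * c i - A i i = -(A j i) := by rw [hci]; ring
      have htj : A i j * c j - A j j * c j - A i j = -(A i j) := by rw [hcj]; ring
      have htk : ∑ k ∈ Finset.univ \ {i, j}, (A i k * c k - A j k * c k - A i k)
          = ∑ k ∈ Finset.univ \ {i, j}, -(min (A i k) (A j k)) := by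
        apply Finset.sum_congr rfl
        intro k hk
        rw [Finset.mem_sdiff, Finset.mem_insert, Finset.mem_singleton] at hk
        have hki : k ≠ i := fun h => hk.2 (Or.inl h)
        have hkj : k ≠ j := fun h => hk.2 (Or.inr h)
        rw [hc]
        dsimp only
        rw [if_neg hki, if_neg hkj]
        split_ifs with hmin
        · rw [min_eq_right hmin]; ring
        · rw [min_eq_left (le_of_not_ge hmin)]; ring
      rw [hti, htj, htk, Finset.sum_neg_distrib, hB]
      ring
    have hfin : (0 - (fderiv ℝ φ x v j * x j - φ x j * v j) / x j ^ 2)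
          - (0 - (fderiv ℝ φ x v i * x i - φ x i * v i) / x i ^ 2) = -B := by
      rw [hqm i, hqm j, hci, hcj, heuli]
      linarith [hident]
    rw [hfin] at h4
    exact h4
  -- Step A : ψ ε ≤ α * ε for small positive ε
  have hstep : ∀ ε, 0 < ε → ε < ε₀ → ψ ε ≤ α * ε := by
    intro ε hεpos hεlt
    have hyU : Y ε ∈ U := hε₀ ε (by rw [abs_of_pos hεpos]; exact hεlt)
    have hypos : ∀ k, 0 < Y ε k := hUsub hyU
    have hτy := tau_pos hφ hUopen hUsub hτmax hyU
    obtain ⟨δ, hδpos, hδlt⟩ := exists_pos_ofReal_lt (lt_min hτx hτy)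
    have hlogY : ∀ k, Real.log (Y ε k) = Real.log (x k) + ε * c k := by
      intro k
      rw [hYdef]
      dsimp only
      rw [Real.log_mul (hxpos k).ne' (Real.exp_ne_zero _), Real.log_exp]
    -- the Hilbert distance from x to Y ε is exactly ε
    have hdeq : hilbertDistRn n x (Y ε) = ε := by
      obtain ⟨i', j', h1, h2, h3⟩ := hilbert_bounds hn0 (fun k => hxpos k) (fun k => hypos k)
      have hlr : ∀ k l : Fin n, x k / Y ε k ≤ x l / Y ε l ↔ c l ≤ c k := by
        intro k l
        rw [ratio_iff_logdiff (hxpos k) (hypos k) (hxpos l) (hypos l),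
          hlogY k, hlogY l]
        constructor
        · intro h
          nlinarith
        · intro h
          nlinarith
      have hci' : c i' = 0 := by
        have := (hlr j i').1 (h1 j)
        rw [hcj] at this
        exact le_antisymm this (hc0 i')
      have hcj' : c j' = 1 := by
        have := (hlr j' i).1 (h2 i)
        rw [hci] at this
        exact le_antisymm (hc1 j') this
      rw [h3, hlogY i', hlogY j', hci', hcj']
      ring
    -- the comparison function g along the two flows
    set g : ℝ → ℝ := fun s => (Real.log (M s x j) - Real.log (M s (Y ε) j))
        - (Real.log (M s x i) - Real.log (M s (Y ε) i)) with hgd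
    have hg0 : g 0 = ε := by
      rw [hgd]
      dsimp only
      rw [hM0 x hx, hM0 _ hyU, hlogY i, hlogY j, hci, hcj]
      ring
    have hdx0 : HasDerivAt (fun s : ℝ => M s x) (φ (M 0 x)) 0 :=
      hMder x hx 0 le_rfl (by simpa using hτx)
    have hdy0 : HasDerivAt (fun s : ℝ => M s (Y ε)) (φ (M 0 (Y ε))) 0 :=
      hMder _ hyU 0 le_rfl (by simpa using hτy)
    have hgder : HasDerivAt g (ψ ε) 0 := by
      have hlx : ∀ k, HasDerivAt (fun s : ℝ => Real.log (M s x k)) (φ x k / x k) 0 := by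
        intro k
        have hne : M 0 x k ≠ 0 := by rw [hM0 x hx]; exact (hxpos k).ne'
        have := (hasDerivAt_pi.1 hdx0 k).log hne
        rw [hM0 x hx] at this
        exact this
      have hly : ∀ k, HasDerivAt (fun s : ℝ => Real.log (M s (Y ε) k))
          (φ (Y ε) k / Y ε k) 0 := by
        intro k
        have hne : M 0 (Y ε) k ≠ 0 := by rw [hM0 _ hyU]; exact (hypos k).ne'
        have := (hasDerivAt_pi.1 hdy0 k).log hne
        rw [hM0 _ hyU] at this
        exact this
      have hD := ((hlx j).sub (hly j)).sub ((hlx i).sub (hly i))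
      rw [hgd, hψ]
      exact hD
    have hGder : HasDerivAt (fun s => Real.exp (α * s) * hilbertDistRn n x (Y ε))
        (α * hilbertDistRn n x (Y ε)) 0 := by
      have h1 : HasDerivAt (fun s : ℝ => α * s) α 0 := by
        simpa using (hasDerivAt_id (0:ℝ)).const_mul α
      have h2 := h1.exp
      have h3 := h2.mul_const (hilbertDistRn n x (Y ε))
      simpa using h3
    have hcomp : ψ ε ≤ α * hilbertDistRn n x (Y ε) := by
      apply right_deriv_le hgder hGder ?_ hδpos ?_
      · rw [hg0, hdeq]; simp
      · intro s hs0 hsδ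
        have hofs : ENNReal.ofReal s < min (τ x) (τ (Y ε)) :=
          lt_trans ((ENNReal.ofReal_lt_ofReal_iff hδpos).2 hsδ) hδlt
        have hXsU : M s x ∈ U :=
          hMmem x hx s (le_of_lt hs0) (lt_of_lt_of_le hofs (min_le_left _ _))
        have hYsU : M s (Y ε) ∈ U :=
          hMmem _ hyU s (le_of_lt hs0) (lt_of_lt_of_le hofs (min_le_right _ _))
        have h1 : g s ≤ hilbertDistRn n (M s x) (M s (Y ε)) := by
          rw [hgd]
          exact hilbert_ge_pair hn0 (hUsub hXsU) (hUsub hYsU) j i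
        have h2 := hαL x hx (Y ε) hyU s (le_of_lt hs0) hofs
        exact le_trans h1 h2
    rw [hdeq] at hcomp
    exact hcomp
  -- Step B : conclude
  have halpha : HasDerivAt (fun ε : ℝ => α * ε) α 0 := by
    simpa using (hasDerivAt_id (0:ℝ)).const_mul α
  have hfinal : -B ≤ α := by
    apply right_deriv_le hψder halpha ?_ hε₀pos hstep
    rw [hψ0]; simp
  linarith [hfinal]

end Necessity

-- FINAL --

theorem nonlinear_flow_hilbert_contraction_rate_Rn (n : ℕ) (hn : 1 < n)
    (φ : (Fin n → ℝ) → Fin n → ℝ) (hφ : ContDiffOn ℝ 1 φ (posOrthant n))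
    (hhom : ∀ l : ℝ, 0 < l → ∀ x ∈ posOrthant n, φ (l • x) = l • φ x)
    (U : Set (Fin n → ℝ)) (hUopen : IsOpen U) (hUconv : Convex ℝ U)
    (hUsub : U ⊆ posOrthant n) (hUcone : ∀ l : ℝ, 0 < l → l • U = U)
    (M : ℝ → (Fin n → ℝ) → Fin n → ℝ) (τ : (Fin n → ℝ) → ℝ≥0∞)
    (hM0 : ∀ x ∈ U, M 0 x = x)
    (hMder : ∀ x ∈ U, ∀ t : ℝ, 0 ≤ t → ENNReal.ofReal t < τ x →
        HasDerivAt (fun s : ℝ => M s x) (φ (M t x)) t)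
    (hMmem : ∀ x ∈ U, ∀ t : ℝ, 0 ≤ t → ENNReal.ofReal t < τ x → M t x ∈ U)
    (hτmax : ∀ x ∈ U, ∀ (γ : ℝ → Fin n → ℝ) (s : ℝ≥0∞), γ 0 = x →
        (∀ t : ℝ, 0 ≤ t → ENNReal.ofReal t < s → HasDerivAt γ (φ (γ t)) t ∧ γ t ∈ U) →
        s ≤ τ x) :
    sInf {α : ℝ | ∀ x ∈ U, ∀ y ∈ U, ∀ t : ℝ, 0 ≤ t → ENNReal.ofReal t < min (τ x) (τ y) →
        hilbertDistRn n (M t x) (M t y) ≤ Real.exp (α * t) * hilbertDistRn n x y} =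
      sSup {r : ℝ | ∃ x ∈ U, r = hMat n (conjJacobian n φ x)} := by
  have hn0 : 0 < n := by omega
  rcases Set.eq_empty_or_nonempty U with hUe | ⟨x₀, hx₀⟩
  · have hL : {α : ℝ | ∀ x ∈ U, ∀ y ∈ U, ∀ t : ℝ, 0 ≤ t →
        ENNReal.ofReal t < min (τ x) (τ y) →
        hilbertDistRn n (M t x) (M t y) ≤ Real.exp (α * t) * hilbertDistRn n x y} =
        Set.univ := by
      rw [Set.eq_univ_iff_forall]
      intro a x hxU
      rw [hUe] at hxU
      exact absurd hxU (Set.notMem_empty x)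
    have hR : {r : ℝ | ∃ x ∈ U, r = hMat n (conjJacobian n φ x)} = ∅ := by
      rw [Set.eq_empty_iff_forall_notMem]
      rintro r ⟨x, hxU, _⟩
      rw [hUe] at hxU
      exact Set.notMem_empty x hxU
    rw [hL, hR, Real.sSup_empty, Real.sInf_of_not_bddBelow]
    rintro ⟨b, hb⟩
    have h1 := hb (Set.mem_univ (b - 1))
    linarith
  · set L := {α : ℝ | ∀ x ∈ U, ∀ y ∈ U, ∀ t : ℝ, 0 ≤ t →
        ENNReal.ofReal t < min (τ x) (τ y) →
        hilbertDistRn n (M t x) (M t y) ≤ Real.exp (α * t) * hilbertDistRn n x y} with hLdef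
    set R := {r : ℝ | ∃ x ∈ U, r = hMat n (conjJacobian n φ x)} with hRdef
    have hRne : R.Nonempty := ⟨hMat n (conjJacobian n φ x₀), ⟨x₀, hx₀, rfl⟩⟩
    have hLub : ∀ a ∈ L, ∀ r ∈ R, r ≤ a := by
      rintro a ha r ⟨x, hxU, rfl⟩
      exact necessity hn hφ hhom hUopen hUsub hM0 hMder hMmem hτmax ha hxU
    by_cases hRb : BddAbove R
    · have hLeq : L = Set.Ici (sSup R) := by
        ext a
        constructor
        · intro ha
          exact csSup_le hRne (fun r hr => hLub a ha r hr)
        · intro ha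
          simp only [Set.mem_Ici] at ha
          intro x hxU y hyU t ht0 htm
          have hαbound : ∀ z ∈ U, hMat n (conjJacobian n φ z) ≤ sSup R :=
            fun z hz => le_csSup hRb ⟨z, hz, rfl⟩
          have h1 := sufficiency_estimate hn hφ hhom hUconv hUsub hM0 hMder hMmem
            hαbound hxU hyU ht0 htm
          refine le_trans h1 ?_
          apply mul_le_mul_of_nonneg_right
          · exact Real.exp_le_exp.2 (mul_le_mul_of_nonneg_right ha ht0)
          · exact hilbert_nonneg hn0 (hUsub hxU) (hUsub hyU)
      rw [hLeq, csInf_Ici]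
    · have hLe : L = ∅ := by
        rw [Set.eq_empty_iff_forall_notMem]
        intro a ha
        exact hRb ⟨a, fun r hr => hLub a ha r hr⟩
      rw [hLe, Real.sInf_empty, Real.sSup_of_not_bddAbove hRb]
end
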